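/- arXiv:1206.2358 — 7 statements merged into one kernel-verified Lean document; each statement's English description precedes it below -/
import Mathlib

section
/- For a monic polynomial p of degree n over the complex numbers with roots λ₁,…,λₙ (with multiplicity), p has exactly n−k distinct complex roots if and only if sDisc₀(p) = ⋯ = sDisc_{k−1}(p) = 0 and sDisc_k(p) ≠ 0, where sDisc_j(p) := Σ_{1≤i₁<⋯<i_{n−j}≤n} ∏_{a<b} (λ_{i_a} − λ_{i_b})². -/
/-- The `k`-th subdiscriminant of a family of `n` roots `lam`:
`sDisc_k = Σ_{1≤i₁<⋯<i_{n−k}≤n} ∏_{a<b} (λ_{i_a} − λ_{i_b})²`. -/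
noncomputable def sDiscVal {F : Type*} [CommRing F] (n k : ℕ) (lam : Fin n → F) : F :=
  ∑ s ∈ Finset.powersetCard (n - k) (Finset.univ : Finset (Fin n)),
    ∏ p ∈ (s ×ˢ s).filter (fun p => p.1 < p.2), (lam p.1 - lam p.2) ^ 2

open Finset Polynomial

/-- A single subdiscriminant term for a subset `s` of indices. -/
noncomputable def trm {n : ℕ} (lam : Fin n → ℂ) (s : Finset (Fin n)) : ℂ :=
  ∏ p ∈ (s ×ˢ s).filter (fun p => p.1 < p.2), (lam p.1 - lam p.2) ^ 2

lemma trm_eq_zero {n : ℕ} (lam : Fin n → ℂ) (s : Finset (Fin n))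
    (h : ¬ Set.InjOn lam s) : trm lam s = 0 := by
  rw [Set.InjOn] at h
  push_neg at h
  obtain ⟨i, hi, j, hj, hij, hne⟩ := h
  simp only [Finset.mem_coe] at hi hj
  rcases lt_or_gt_of_ne hne with h1 | h1
  · exact Finset.prod_eq_zero (i := (i, j)) (by simp [hi, hj, h1]) (by simp [hij])
  · exact Finset.prod_eq_zero (i := (j, i)) (by simp [hi, hj, h1]) (by simp [hij])

lemma offDiag_split {n : ℕ} (s : Finset (Fin n)) :
    s.offDiag = (s ×ˢ s).filter (fun p => p.1 < p.2) ∪ (s ×ˢ s).filter (fun p => p.2 < p.1) := by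
  ext ⟨a, b⟩
  simp only [Finset.mem_offDiag, Finset.mem_union, Finset.mem_filter, Finset.mem_product]
  constructor
  · rintro ⟨ha, hb, hne⟩
    rcases lt_or_gt_of_ne hne with h | h
    · exact Or.inl ⟨⟨ha, hb⟩, h⟩
    · exact Or.inr ⟨⟨ha, hb⟩, h⟩
  · rintro (⟨⟨ha, hb⟩, h⟩ | ⟨⟨ha, hb⟩, h⟩) <;> exact ⟨ha, hb, by omega⟩

lemma disj_split {n : ℕ} (s : Finset (Fin n)) :
    Disjoint ((s ×ˢ s).filter (fun p => p.1 < p.2)) ((s ×ˢ s).filter (fun p => p.2 < p.1)) := by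
  rw [Finset.disjoint_left]
  rintro ⟨a,b⟩ h1 h2
  simp only [Finset.mem_filter] at h1 h2
  exact absurd h2.2 (not_lt.2 h1.2.le)

lemma prod_swap_filter {n : ℕ} (s : Finset (Fin n)) (f : Fin n → Fin n → ℂ) :
    ∏ p ∈ (s ×ˢ s).filter (fun p => p.2 < p.1), f p.1 p.2 =
      ∏ p ∈ (s ×ˢ s).filter (fun p => p.1 < p.2), f p.2 p.1 := by
  refine Finset.prod_bij (fun p _ => (p.2, p.1)) ?_ ?_ ?_ ?_
  · rintro ⟨a,b⟩ h
    simp only [Finset.mem_filter, Finset.mem_product] at h ⊢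
    exact ⟨⟨h.1.2, h.1.1⟩, h.2⟩
  · rintro ⟨a,b⟩ _ ⟨c,d⟩ _ h; simpa [Prod.ext_iff, and_comm] using h
  · rintro ⟨a,b⟩ h
    refine ⟨(b,a), ?_, rfl⟩
    simp only [Finset.mem_filter, Finset.mem_product] at h ⊢
    exact ⟨⟨h.1.2, h.1.1⟩, h.2⟩
  · rintro ⟨a,b⟩ _; rfl

lemma card_lt_filter {n : ℕ} (s : Finset (Fin n)) :
    2 * ((s ×ˢ s).filter (fun p => p.1 < p.2)).card = s.card * s.card - s.card := by
  have h2 : ((s ×ˢ s).filter (fun p => p.2 < p.1)).card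
      = ((s ×ˢ s).filter (fun p => p.1 < p.2)).card := by
    apply Finset.card_bij (fun p _ => (p.2, p.1))
    · rintro ⟨a,b⟩ h
      simp only [Finset.mem_filter, Finset.mem_product] at h ⊢
      exact ⟨⟨h.1.2, h.1.1⟩, h.2⟩
    · rintro ⟨a,b⟩ _ ⟨c,d⟩ _ h; simpa [Prod.ext_iff, and_comm] using h
    · rintro ⟨a,b⟩ h
      refine ⟨(b,a), ?_, rfl⟩
      simp only [Finset.mem_filter, Finset.mem_product] at h ⊢
      exact ⟨⟨h.1.2, h.1.1⟩, h.2⟩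
  have := Finset.card_union_of_disjoint (disj_split s)
  rw [← offDiag_split s, Finset.offDiag_card] at this
  omega

lemma trm_inj {n : ℕ} (lam : Fin n → ℂ) (s : Finset (Fin n)) (h : Set.InjOn lam s) :
    trm lam s = (-1) ^ ((s ×ˢ s).filter (fun p => p.1 < p.2)).card *
      ∏ p ∈ (s.image lam).offDiag, (p.1 - p.2) := by
  have hoff : ∏ p ∈ (s.image lam).offDiag, (p.1 - p.2) = ∏ p ∈ s.offDiag, (lam p.1 - lam p.2) := by
    refine (Finset.prod_bij (fun (p : Fin n × Fin n) _ => (lam p.1, lam p.2)) ?_ ?_ ?_ ?_).symm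
    · rintro ⟨a,b⟩ hp
      simp only [Finset.mem_offDiag] at hp
      simp only [Finset.mem_offDiag, Finset.mem_image]
      exact ⟨⟨a, hp.1, rfl⟩, ⟨b, hp.2.1, rfl⟩, fun he => hp.2.2 (h hp.1 hp.2.1 he)⟩
    · rintro ⟨a,b⟩ ha ⟨c,d⟩ hc he
      simp only [Finset.mem_offDiag] at ha hc
      simp only [Prod.ext_iff] at he ⊢
      exact ⟨h ha.1 hc.1 he.1, h ha.2.1 hc.2.1 he.2⟩
    · rintro ⟨x,y⟩ hp
      simp only [Finset.mem_offDiag, Finset.mem_image] at hp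
      obtain ⟨⟨a, ha, rfl⟩, ⟨b, hb, rfl⟩, hne⟩ := hp
      exact ⟨(a,b), Finset.mem_offDiag.2 ⟨ha, hb, fun he => hne (congrArg lam he)⟩, rfl⟩
    · rintro ⟨a,b⟩ _; rfl
  rw [hoff, offDiag_split s, Finset.prod_union (disj_split s),
    prod_swap_filter s (fun a b => lam a - lam b), ← Finset.prod_mul_distrib]
  have h3 : ∏ x ∈ (s ×ˢ s).filter (fun p => p.1 < p.2), ((lam x.1 - lam x.2) * (lam x.2 - lam x.1))
      = (-1 : ℂ) ^ ((s ×ˢ s).filter (fun p => p.1 < p.2)).card *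
        ∏ x ∈ (s ×ˢ s).filter (fun p => p.1 < p.2), (lam x.1 - lam x.2) ^ 2 := by
    rw [← Finset.prod_const (-1 : ℂ), ← Finset.prod_mul_distrib]
    exact Finset.prod_congr rfl fun x _ => by ring
  rw [h3, ← mul_assoc, ← mul_pow]
  unfold trm
  norm_num

lemma sDisc_trm (n j : ℕ) (lam : Fin n → ℂ) :
    sDiscVal n j lam = ∑ s ∈ Finset.powersetCard (n - j) Finset.univ, trm lam s := rfl

lemma sDisc_vanish (n j : ℕ) (lam : Fin n → ℂ)
    (h : (Finset.univ.image lam).card < n - j) : sDiscVal n j lam = 0 := by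
  rw [sDisc_trm]
  refine Finset.sum_eq_zero fun s hs => ?_
  rw [Finset.mem_powersetCard] at hs
  refine trm_eq_zero lam s fun hinj => ?_
  have h1 : s.image lam ⊆ Finset.univ.image lam := Finset.image_subset_image (Finset.subset_univ s)
  have h2 : (s.image lam).card = s.card := Finset.card_image_of_injOn hinj
  have := Finset.card_le_card h1
  omega

lemma sDisc_nonzero (n : ℕ) (hn : 1 ≤ n) (lam : Fin n → ℂ) :
    sDiscVal n (n - (Finset.univ.image lam).card) lam ≠ 0 := by
  have : Nonempty (Fin n) := ⟨⟨0, hn⟩⟩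
  classical
  set T := Finset.univ.image lam with hT
  set m := T.card with hm
  have hmn : m ≤ n := by
    simpa using (Finset.card_image_le (s := (Finset.univ : Finset (Fin n))) (f := lam))
  have hnm : n - (n - m) = m := by omega
  rw [sDisc_trm, hnm]
  set C : ℂ := (-1) ^ ((m * m - m) / 2) * ∏ p ∈ T.offDiag, (p.1 - p.2) with hC
  have hCne : C ≠ 0 := by
    apply mul_ne_zero (pow_ne_zero _ (by norm_num))
    refine Finset.prod_ne_zero_iff.2 fun p hp => ?_
    rw [Finset.mem_offDiag] at hp
    exact sub_ne_zero_of_ne hp.2.2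
  set Q := (Finset.powersetCard m (Finset.univ : Finset (Fin n))).filter
      (fun s : Finset (Fin n) => Set.InjOn lam (s : Set (Fin n))) with hQ
  have hsum : ∑ s ∈ Finset.powersetCard m Finset.univ, trm lam s = Q.card • C := by
    rw [← Finset.sum_filter_of_ne (f := trm lam)
      (p := fun s : Finset (Fin n) => Set.InjOn lam (s : Set (Fin n)))
      (fun s _ hne => by_contra fun hni => hne (trm_eq_zero lam s hni))]
    rw [← hQ, Finset.sum_eq_card_nsmul (b := C)]
    rintro s hs
    rw [hQ, Finset.mem_filter, Finset.mem_powersetCard] at hs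
    obtain ⟨⟨-, hcard⟩, hinj⟩ := hs
    have himg : s.image lam = T := by
      apply Finset.eq_of_subset_of_card_le (Finset.image_subset_image (Finset.subset_univ s))
      rw [Finset.card_image_of_injOn hinj, hcard]
    have hf : ((s ×ˢ s).filter (fun p => p.1 < p.2)).card = (m * m - m) / 2 := by
      have hcl := card_lt_filter s
      rw [hcard] at hcl
      omega
    rw [trm_inj lam s hinj, himg, hf]
  rw [hsum]
  have hQne : Q.Nonempty := by
    refine ⟨T.image (Function.invFun lam), ?_⟩
    have hsec : ∀ x ∈ T, lam (Function.invFun lam x) = x := by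
      intro x hx
      rw [hT, Finset.mem_image] at hx
      obtain ⟨i, -, rfl⟩ := hx
      exact Function.invFun_eq ⟨i, rfl⟩
    have hinjT : Set.InjOn (Function.invFun lam) T := by
      intro x hx y hy hxy
      rw [← hsec x hx, ← hsec y hy, hxy]
    rw [hQ, Finset.mem_filter, Finset.mem_powersetCard]
    refine ⟨⟨Finset.subset_univ _, by rw [Finset.card_image_of_injOn hinjT]⟩, ?_⟩
    intro i hi j hj hij
    simp only [Finset.coe_image, Set.mem_image, Finset.mem_coe] at hi hj
    obtain ⟨x, hx, rfl⟩ := hi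
    obtain ⟨y, hy, rfl⟩ := hj
    rw [hsec x hx, hsec y hy] at hij
    rw [hij]
  have hQc : (Q.card : ℂ) ≠ 0 := by
    simp only [ne_eq, Nat.cast_eq_zero]
    exact Finset.card_ne_zero_of_mem hQne.choose_spec
  simp only [nsmul_eq_mul]
  exact mul_ne_zero hQc hCne

lemma roots_toFinset (n : ℕ) (lam : Fin n → ℂ) :
    (∏ i, (X - C (lam i))).roots.toFinset = Finset.univ.image lam := by
  have h : (∏ i, (X - C (lam i)))
      = (Multiset.map (fun a => X - C a) (Multiset.map lam Finset.univ.val)).prod := by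
    simp [Finset.prod, Multiset.map_map, Function.comp_def]
  rw [h, roots_multiset_prod_X_sub_C]
  ext x; simp [List.mem_ofFn]

/-- A monic polynomial `p = ∏ (x − λᵢ)` of degree `n` has exactly `n − k` distinct
complex roots iff `sDisc₀(p) = ⋯ = sDisc_{k−1}(p) = 0` and `sDisc_k(p) ≠ 0`. -/
theorem stmt0 (n k : ℕ) (hn : 1 ≤ n) (hk : k ≤ n - 1)
    (p : Polynomial ℂ) (lam : Fin n → ℂ)
    (hp : p = ∏ i, (Polynomial.X - Polynomial.C (lam i))) :
    p.roots.toFinset.card = n - k ↔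
      ((∀ j < k, sDiscVal n j lam = 0) ∧ sDiscVal n k lam ≠ 0) := by
  have hroots : p.roots.toFinset = Finset.univ.image lam := by
    rw [hp]; exact roots_toFinset n lam
  rw [hroots]
  have hmn : (Finset.univ.image lam).card ≤ n := by
    simpa using (Finset.card_image_le (s := (Finset.univ : Finset (Fin n))) (f := lam))
  constructor
  · intro hmk
    have hk' : n - (Finset.univ.image lam).card = k := by omega
    constructor
    · intro j hj
      exact sDisc_vanish n j lam (by omega)
    · have := sDisc_nonzero n hn lam
      rwa [hk'] at this
  · rintro ⟨hz, hne⟩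
    have h1 : ¬ ((Finset.univ.image lam).card < n - k) := fun h => hne (sDisc_vanish n k lam h)
    have h2 : ¬ (n - (Finset.univ.image lam).card < k) := fun h =>
      (sDisc_nonzero n hn lam) (hz _ h)
    omega
end

section
/- An n×n complex matrix A has exactly n−k distinct eigenvalues if and only if sDisc₀(A) = ⋯ = sDisc_{k−1}(A) = 0 and sDisc_k(A) ≠ 0. -/
/-- Squared difference function on unordered pairs. -/
noncomputable def sqDiff : Sym2 ℂ → ℂ := Sym2.lift ⟨fun x y => (x - y) ^ 2, by intros; ring⟩

@[simp] lemma sqDiff_mk (x y : ℂ) : sqDiff s(x, y) = (x - y) ^ 2 := rfl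

lemma prod_zero_of_not_injOn {n : ℕ} (lam : Fin n → ℂ) (s : Finset (Fin n))
    (h : ¬ Set.InjOn lam ↑s) :
    ∏ p ∈ (s ×ˢ s).filter (fun p => p.1 < p.2), (lam p.1 - lam p.2) ^ 2 = 0 := by
  rw [Set.InjOn] at h
  push_neg at h
  obtain ⟨a, ha, b, hb, hab, hne⟩ := h
  rcases lt_or_gt_of_ne hne with hlt | hgt
  · refine Finset.prod_eq_zero (i := (a, b)) ?_ ?_
    · simp [Finset.mem_filter, Finset.mem_product, Finset.mem_coe.mp ha, Finset.mem_coe.mp hb, hlt]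
    · simp [hab]
  · refine Finset.prod_eq_zero (i := (b, a)) ?_ ?_
    · simp [Finset.mem_filter, Finset.mem_product, Finset.mem_coe.mp ha, Finset.mem_coe.mp hb, hgt]
    · simp [hab]

lemma prod_eq_of_injOn {n : ℕ} (lam : Fin n → ℂ) (s : Finset (Fin n))
    (hinj : Set.InjOn lam ↑s) :
    ∏ p ∈ (s ×ˢ s).filter (fun p => p.1 < p.2), (lam p.1 - lam p.2) ^ 2
      = ∏ e ∈ (s.image lam).sym2.filter (fun e => ¬ e.IsDiag), sqDiff e := by
  refine Finset.prod_nbij (fun p => s(lam p.1, lam p.2)) ?_ ?_ ?_ ?_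
  · rintro ⟨a, b⟩ hp
    simp only [Finset.mem_filter, Finset.mem_product] at hp
    obtain ⟨⟨ha, hb⟩, hlt⟩ := hp
    simp only [Finset.mem_coe, Finset.mem_filter, Finset.mk_mem_sym2_iff,
      Finset.mem_image, Sym2.mk_isDiag_iff]
    refine ⟨⟨⟨a, ha, rfl⟩, ⟨b, hb, rfl⟩⟩, fun heq => ?_⟩
    exact absurd (hinj ha hb heq) (ne_of_lt hlt)
  · rintro ⟨a, b⟩ hp ⟨c, d⟩ hq heq
    simp only [Finset.mem_coe, Finset.mem_filter, Finset.mem_product] at hp hq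
    obtain ⟨⟨ha, hb⟩, hab⟩ := hp
    obtain ⟨⟨hc, hd⟩, hcd⟩ := hq
    rw [Sym2.eq_iff] at heq
    rcases heq with ⟨h1, h2⟩ | ⟨h1, h2⟩
    · have e1 := hinj ha hc h1
      have e2 := hinj hb hd h2
      simp [e1, e2]
    · have e1 := hinj ha hd h1
      have e2 := hinj hb hc h2
      subst e1; subst e2
      exact absurd hcd (not_lt.2 (le_of_lt hab))
  · intro e he
    induction e using Sym2.ind with
    | _ x y =>
      simp only [Finset.mem_coe, Finset.mem_filter, Finset.mk_mem_sym2_iff,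
        Finset.mem_image, Sym2.mk_isDiag_iff] at he
      obtain ⟨⟨⟨a, ha, rfl⟩, ⟨b, hb, rfl⟩⟩, hne⟩ := he
      have hab : a ≠ b := fun h => hne (by rw [h])
      rcases lt_or_gt_of_ne hab with hlt | hgt
      · exact ⟨(a, b), by simp [Finset.mem_filter, Finset.mem_product, ha, hb, hlt], rfl⟩
      · exact ⟨(b, a), by simp [Finset.mem_filter, Finset.mem_product, ha, hb, hgt],
          Sym2.eq_swap⟩
  · rintro ⟨a, b⟩ _
    simp

lemma discr_ne_zero {n : ℕ} (lam : Fin n → ℂ) :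
    ∏ e ∈ ((Finset.univ.image lam).sym2.filter (fun e => ¬ e.IsDiag)), sqDiff e ≠ 0 := by
  rw [Finset.prod_ne_zero_iff]
  intro e he
  induction e using Sym2.ind with
  | _ x y =>
    simp only [Finset.mem_filter, Sym2.mk_isDiag_iff] at he
    simpa [sub_eq_zero] using he.2

/-- An `n×n` complex matrix `A` with eigenvalues `λ₁,…,λₙ` (roots of the characteristic
polynomial with multiplicity) has exactly `n−k` distinct eigenvalues iff
`sDisc₀(A) = ⋯ = sDisc_{k−1}(A) = 0` and `sDisc_k(A) ≠ 0`. -/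
theorem stmt2 (n k : ℕ) (hn : 1 ≤ n) (hk : k ≤ n - 1)
    (A : Matrix (Fin n) (Fin n) ℂ) (lam : Fin n → ℂ)
    (hA : A.charpoly = ∏ i, (Polynomial.X - Polynomial.C (lam i))) :
    (Finset.univ.image lam).card = n - k ↔
      ((∀ j < k, sDiscVal n j lam = 0) ∧ sDiscVal n k lam ≠ 0) := by
  classical
  set T : Finset ℂ := Finset.univ.image lam with hT
  set m : ℕ := T.card with hm
  have hmn : m ≤ n := le_trans (Finset.card_image_le) (by simp)
  have hm1 : 1 ≤ m := by
    have : (Finset.univ : Finset (Fin n)).Nonempty := by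
      rw [Finset.univ_nonempty_iff]
      exact Fin.pos_iff_nonempty.mp hn
    exact Finset.card_pos.mpr (this.image lam)
  -- F1: vanishing below n - m
  have F1 : ∀ j, j < n - m → sDiscVal n j lam = 0 := by
    intro j hj
    apply Finset.sum_eq_zero
    intro s hs
    rw [Finset.mem_powersetCard_univ] at hs
    apply prod_zero_of_not_injOn
    intro hinj
    have h1 : (s.image lam).card = s.card := Finset.card_image_of_injOn hinj
    have h2 : (s.image lam).card ≤ m := Finset.card_le_card (by
      intro x hx
      obtain ⟨a, _, rfl⟩ := Finset.mem_image.mp hx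
      exact Finset.mem_image_of_mem lam (Finset.mem_univ a))
    have h3 : m < n - j := by omega
    omega
  -- F2: nonvanishing at n - m
  have F2 : sDiscVal n (n - m) lam ≠ 0 := by
    have hnm : n - (n - m) = m := Nat.sub_sub_self hmn
    unfold sDiscVal
    rw [hnm]
    set P := Finset.powersetCard m (Finset.univ : Finset (Fin n)) with hP
    set D := ∏ e ∈ (T.sym2.filter (fun e => ¬ e.IsDiag)), sqDiff e with hD
    have hDne : D ≠ 0 := discr_ne_zero lam
    -- the injective subsets
    have key : ∀ s : Finset (Fin n), s ∈ P.filter (fun s : Finset (Fin n) => Set.InjOn lam ↑s) →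
        ∏ p ∈ (s ×ˢ s).filter (fun p => p.1 < p.2), (lam p.1 - lam p.2) ^ 2 = D := by
      intro s hs
      rw [Finset.mem_filter, Finset.mem_powersetCard_univ] at hs
      obtain ⟨hcard, hinj⟩ := hs
      rw [prod_eq_of_injOn lam s hinj]
      have himg : s.image lam = T := by
        apply Finset.eq_of_subset_of_card_le
        · intro x hx
          obtain ⟨a, _, rfl⟩ := Finset.mem_image.mp hx
          exact Finset.mem_image_of_mem lam (Finset.mem_univ a)
        · rw [Finset.card_image_of_injOn hinj, hcard]
      rw [himg]
    -- a witness injective subset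
    have hne : (P.filter (fun s : Finset (Fin n) => Set.InjOn lam ↑s)).Nonempty := by
      have hFn : Nonempty (Fin n) := Fin.pos_iff_nonempty.mp hn
      set g : ℂ → Fin n := Function.invFun lam with hg
      have hgl : ∀ x ∈ T, lam (g x) = x := by
        intro x hx
        obtain ⟨a, _, ha⟩ := Finset.mem_image.mp hx
        exact Function.invFun_eq ⟨a, ha⟩
      refine ⟨T.image g, ?_⟩
      have hcard : (T.image g).card = m := by
        rw [Finset.card_image_of_injOn]
        intro x hx y hy hxy
        rw [← hgl x hx, ← hgl y hy, hxy]
      rw [Finset.mem_filter, Finset.mem_powersetCard_univ]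
      refine ⟨hcard, ?_⟩
      intro a ha b hb hab
      obtain ⟨x, hx, rfl⟩ := Finset.mem_image.mp ha
      obtain ⟨y, hy, rfl⟩ := Finset.mem_image.mp hb
      rw [hgl x hx, hgl y hy] at hab
      rw [hab]
    rw [← Finset.sum_filter_add_sum_filter_not P (fun s : Finset (Fin n) => Set.InjOn lam ↑s)]
    have hz : ∑ s ∈ P.filter (fun s : Finset (Fin n) => ¬ Set.InjOn lam ↑s),
        ∏ p ∈ (s ×ˢ s).filter (fun p => p.1 < p.2), (lam p.1 - lam p.2) ^ 2 = 0 := by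
      apply Finset.sum_eq_zero
      intro s hs
      exact prod_zero_of_not_injOn lam s (Finset.mem_filter.mp hs).2
    rw [hz, add_zero, Finset.sum_congr rfl key, Finset.sum_const, nsmul_eq_mul]
    exact mul_ne_zero (Nat.cast_ne_zero.mpr (Finset.card_ne_zero_of_mem hne.choose_spec)) hDne
  constructor
  · rintro hcard
    have hkm : k = n - m := by omega
    subst hkm
    exact ⟨fun j hj => F1 j hj, F2⟩
  · rintro ⟨h1, h2⟩
    have hle1 : n - m ≤ k := by
      by_contra h
      exact h2 (F1 k (by omega))
    have hle2 : k ≤ n - m := by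
      by_contra h
      exact F2 (h1 (n - m) (by omega))
    omega
end

section
/- Let F be a field of characteristic zero and let τ : F[x₁,…,xₙ] → F[x₁,…,xₙ]^{Sₙ}, τ(f) = (1/n!) Σ_{g∈Sₙ} g·f, be the symmetrization (Reynolds) operator. For any monomial m = x₁^{α₁}⋯xₙ^{αₙ} with α₁ + ⋯ + α_{n−k} < (n−k)(n−k−1)/2, one has τ(m · δ(x₁,…,x_{n−k})) = 0. -/
/-- The Vandermonde product `δ(x₁,…,x_{n−k}) = ∏_{1≤a<b≤n−k}(x_a − x_b)` inside
the polynomial ring in `n` variables. -/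
noncomputable def vandermondeDelta (F : Type*) [CommRing F] (n k : ℕ) : MvPolynomial (Fin n) F :=
  ∏ p ∈ (Finset.univ : Finset (Fin (n - k) × Fin (n - k))).filter (fun p => p.1 < p.2),
    (MvPolynomial.X (Fin.castLE (Nat.sub_le n k) p.1) -
      MvPolynomial.X (Fin.castLE (Nat.sub_le n k) p.2))

/-- The Reynolds (symmetrization) operator `τ(f) = (1/n!) Σ_{g∈Sₙ} g·f`. -/
noncomputable def reynolds (F : Type*) [Field F] (n : ℕ) (f : MvPolynomial (Fin n) F) :
    MvPolynomial (Fin n) F :=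
  ((n.factorial : F)⁻¹) • ∑ g : Equiv.Perm (Fin n), MvPolynomial.rename (⇑g) f

open Finset

private lemma stmt7_prod_pairs {M : Type*} [CommMonoid M] {m : ℕ} (f : Fin m → Fin m → M) :
    ∏ p ∈ (univ : Finset (Fin m × Fin m)).filter (fun p => p.1 < p.2), f p.1 p.2
      = ∏ i, ∏ j ∈ Ioi i, f i j := by
  rw [Finset.prod_sigma']
  exact Finset.prod_nbij' (fun p => ⟨p.1, p.2⟩) (fun p => (p.1, p.2))
    (by simp) (by simp) (by simp) (by simp) (by simp)

private lemma stmt7_vand_perm {R : Type*} [CommRing R] {m : ℕ} (v : Fin m → R)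
    (σ : Equiv.Perm (Fin m)) :
    ∏ p ∈ (univ : Finset (Fin m × Fin m)).filter (fun p => p.1 < p.2), (v (σ p.1) - v (σ p.2))
      = ((Equiv.Perm.sign σ : ℤ) : R) *
        ∏ p ∈ (univ : Finset (Fin m × Fin m)).filter (fun p => p.1 < p.2), (v p.1 - v p.2) := by
  set S := (univ : Finset (Fin m × Fin m)).filter (fun p => p.1 < p.2) with hS
  have flip : ∀ w : Fin m → R,
      ∏ p ∈ S, (w p.1 - w p.2) = (-1) ^ S.card * ∏ p ∈ S, (w p.2 - w p.1) := by
    intro w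
    rw [← Finset.prod_const, ← Finset.prod_mul_distrib]
    exact Finset.prod_congr rfl (by intros; ring)
  have hdet : ∏ i, ∏ j ∈ Ioi i, (v (σ j) - v (σ i))
      = ((Equiv.Perm.sign σ : ℤ) : R) * ∏ i, ∏ j ∈ Ioi i, (v j - v i) := by
    have h2 : Matrix.vandermonde (v ∘ σ) = (Matrix.vandermonde v).submatrix σ id := by
      ext i j; simp [Matrix.vandermonde]
    have h3 := Matrix.det_vandermonde (v ∘ σ)
    rw [h2, Matrix.det_permute, Matrix.det_vandermonde] at h3
    simpa [Function.comp] using h3.symm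
  rw [flip (fun a => v (σ a)), flip v]
  have e1 : ∏ p ∈ S, (v (σ p.2) - v (σ p.1)) = ∏ i, ∏ j ∈ Ioi i, (v (σ j) - v (σ i)) :=
    stmt7_prod_pairs (fun a b => v (σ b) - v (σ a))
  have e2 : ∏ p ∈ S, (v p.2 - v p.1) = ∏ i, ∏ j ∈ Ioi i, (v j - v i) :=
    stmt7_prod_pairs (fun a b => v b - v a)
  rw [e1, e2, hdet]; ring

private lemma stmt7_auxmono {m : ℕ} (f : Fin m → ℕ) (hf : StrictMono f) :
    ∀ j (h : j < m), j ≤ f ⟨j, h⟩ := by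
  intro j
  induction j with
  | zero => intro _; exact Nat.zero_le _
  | succ j ih =>
    intro h
    have h1 := hf (show (⟨j, by omega⟩ : Fin m) < ⟨j+1, h⟩ by simp [Fin.lt_def])
    have h2 := ih (by omega)
    omega

private lemma stmt7_sum_lb {m : ℕ} (f : Fin m → ℕ) (hf : Function.Injective f) :
    ∑ i ∈ range m, i ≤ ∑ i, f i := by
  set s : Finset ℕ := Finset.image f univ with hs
  have hcard : s.card = m := by
    rw [hs, Finset.card_image_of_injective _ hf, Finset.card_univ, Fintype.card_fin]
  have hsum : ∑ x ∈ s, x = ∑ i, f i := Finset.sum_image (fun a _ b _ h => hf h)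
  rw [← hsum]
  set e := s.orderEmbOfFin hcard with he
  have himg : Finset.image (⇑e) univ = s := by
    apply Finset.coe_injective
    rw [Finset.coe_image, Finset.coe_univ, Set.image_univ]
    exact Finset.range_orderEmbOfFin s hcard
  rw [← himg, Finset.sum_image (fun a _ b _ h => e.injective h)]
  rw [← Fin.sum_univ_eq_sum_range (fun i => i) m]
  exact Finset.sum_le_sum fun i _ => stmt7_auxmono e e.strictMono i i.2

/-- If `α₁ + ⋯ + α_{n−k} < (n−k)(n−k−1)/2`, then
`τ(x₁^{α₁}⋯xₙ^{αₙ} · δ(x₁,…,x_{n−k})) = 0`. -/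
theorem stmt7 (F : Type*) [Field F] [CharZero F] (n k : ℕ) (hk : k ≤ n)
    (α : Fin n → ℕ)
    (hdeg : 2 * ∑ i : Fin (n - k), α (Fin.castLE (Nat.sub_le n k) i) < (n - k) * (n - k - 1)) :
    reynolds F n ((∏ i, MvPolynomial.X i ^ α i) * vandermondeDelta F n k) = 0 := by
  classical
  set c : Fin (n - k) → Fin n := Fin.castLE (Nat.sub_le n k) with hc
  -- there exist two distinct indices in the first block with equal exponents
  have hninj : ¬ Function.Injective (fun i : Fin (n - k) => α (c i)) := by
    intro hinj
    have hb := stmt7_sum_lb _ hinj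
    have h2 := Finset.sum_range_id_mul_two (n - k)
    omega
  obtain ⟨a, b, hab, hne⟩ : ∃ a b : Fin (n - k), α (c a) = α (c b) ∧ a ≠ b := by
    simp only [Function.Injective, not_forall] at hninj
    obtain ⟨a, b, h1, h2⟩ := hninj
    exact ⟨a, b, h1, h2⟩
  -- the swap on Fin n
  set s : Equiv.Perm (Fin n) := Equiv.swap (c a) (c b) with hsdef
  have hcinj : Function.Injective c := Fin.castLE_injective _
  have hcab : c a ≠ c b := fun h => hne (hcinj h)
  have hswap_comm : ∀ x : Fin (n - k), s (c x) = c (Equiv.swap a b x) := by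
    intro x
    rcases eq_or_ne x a with rfl | hxa
    · simp [hsdef]
    rcases eq_or_ne x b with rfl | hxb
    · simp [hsdef]
    · rw [hsdef, Equiv.swap_apply_of_ne_of_ne (fun h => hxa (hcinj h)) (fun h => hxb (hcinj h)),
        Equiv.swap_apply_of_ne_of_ne hxa hxb]
  -- renaming by s negates the Vandermonde delta
  have hδ : MvPolynomial.rename (⇑s) (vandermondeDelta F n k) = -(vandermondeDelta F n k) := by
    unfold vandermondeDelta
    rw [map_prod]
    have step : ∀ p ∈ (univ : Finset (Fin (n - k) × Fin (n - k))).filter (fun p => p.1 < p.2),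
        MvPolynomial.rename (⇑s)
            (MvPolynomial.X (c p.1) - MvPolynomial.X (c p.2) : MvPolynomial (Fin n) F)
          = (MvPolynomial.X (c (Equiv.swap a b p.1)) - MvPolynomial.X (c (Equiv.swap a b p.2))) := by
      intro p _
      rw [map_sub, MvPolynomial.rename_X, MvPolynomial.rename_X, hswap_comm, hswap_comm]
    rw [Finset.prod_congr rfl step]
    have := stmt7_vand_perm (fun x : Fin (n - k) => (MvPolynomial.X (c x) : MvPolynomial (Fin n) F))
      (Equiv.swap a b)
    rw [this, Equiv.Perm.sign_swap hne]
    push_cast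
    ring
  -- renaming by s fixes the monomial
  have hα : ∀ x : Fin n, α (s x) = α x := by
    intro x
    rcases eq_or_ne x (c a) with rfl | hxa
    · rw [hsdef, Equiv.swap_apply_left, ← hab]
    rcases eq_or_ne x (c b) with rfl | hxb
    · rw [hsdef, Equiv.swap_apply_right, hab]
    · rw [hsdef, Equiv.swap_apply_of_ne_of_ne hxa hxb]
  have hmon : MvPolynomial.rename (⇑s)
      ((∏ i, MvPolynomial.X i ^ α i : MvPolynomial (Fin n) F))
      = ∏ i, MvPolynomial.X i ^ α i := by
    rw [map_prod]
    simp only [map_pow, MvPolynomial.rename_X]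
    calc ∏ i, (MvPolynomial.X (s i) : MvPolynomial (Fin n) F) ^ α i
        = ∏ i, MvPolynomial.X (s i) ^ α (s i) := by
          exact Finset.prod_congr rfl fun i _ => by rw [hα]
      _ = ∏ i, MvPolynomial.X i ^ α i := Equiv.prod_comp s (fun i => MvPolynomial.X i ^ α i)
  set f : MvPolynomial (Fin n) F := (∏ i, MvPolynomial.X i ^ α i) * vandermondeDelta F n k with hf
  have hkey : MvPolynomial.rename (⇑s) f = -f := by
    rw [hf, map_mul, hδ, hmon, mul_neg]
  -- pairing argument over the symmetric group
  have hsum : ∑ g : Equiv.Perm (Fin n), MvPolynomial.rename (⇑g) f = 0 := by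
    set T := ∑ g : Equiv.Perm (Fin n), MvPolynomial.rename (⇑g) f with hT
    have h1 : T = ∑ g : Equiv.Perm (Fin n), MvPolynomial.rename (⇑(g * s)) f :=
      (Equiv.sum_comp (Equiv.mulRight s) (fun g => MvPolynomial.rename (⇑g) f)).symm
    have h2 : ∀ g : Equiv.Perm (Fin n),
        MvPolynomial.rename (⇑(g * s)) f = MvPolynomial.rename (⇑g) (MvPolynomial.rename (⇑s) f) := by
      intro g
      rw [MvPolynomial.rename_rename]
      rfl
    have h3 : T + T = 0 := by
      nth_rewrite 2 [h1]
      rw [← Finset.sum_add_distrib]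
      apply Finset.sum_eq_zero
      intro g _
      rw [h2, hkey, map_neg, add_neg_cancel]
    have h4 : (2 : F) • T = 0 := by rw [two_smul]; exact h3
    rcases smul_eq_zero.mp h4 with h | h
    · exact absurd h two_ne_zero
    · exact h
  rw [reynolds, hsum, smul_zero]
end

section
/- For every real symmetric n×n matrix A and 0 ≤ k ≤ n−2, sDisc_k(A) ≥ 0, and sDisc_k(A) = 0 if and only if A has at most n−k−1 distinct (real) eigenvalues. -/
/-- For every real symmetric `n×n` matrix `A`, `sDisc_k(A) ≥ 0`, with equality iff
`A` has at most `n−k−1` distinct (real) eigenvalues. -/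
theorem stmt12 (n k : ℕ) (hn : 2 ≤ n) (hk : k ≤ n - 2)
    (A : Matrix (Fin n) (Fin n) ℝ) (hA : A.IsHermitian) :
    0 ≤ sDiscVal n k hA.eigenvalues ∧
      (sDiscVal n k hA.eigenvalues = 0 ↔
        (Finset.univ.image hA.eigenvalues).card ≤ n - k - 1) := by
  classical
  set lam := hA.eigenvalues with hlam
  have hterm : ∀ s : Finset (Fin n),
      0 ≤ ∏ p ∈ (s ×ˢ s).filter (fun p => p.1 < p.2), (lam p.1 - lam p.2) ^ 2 :=
    fun s => Finset.prod_nonneg fun p _ => sq_nonneg _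
  have hnonneg : 0 ≤ sDiscVal n k lam :=
    Finset.sum_nonneg fun s _ => hterm s
  refine ⟨hnonneg, ?_⟩
  rw [sDiscVal, Finset.sum_eq_zero_iff_of_nonneg (fun s _ => hterm s)]
  have hnk : 2 ≤ n - k := by omega
  constructor
  · intro h
    by_contra hcard
    push_neg at hcard
    have hcard' : n - k ≤ (Finset.univ.image lam).card := by omega
    obtain ⟨u, hu_sub, hu_card⟩ :=
      Finset.exists_subset_card_eq hcard'
    have hsec : ∀ y ∈ u, ∃ x : Fin n, lam x = y := by
      intro y hy
      obtain ⟨x, -, hx⟩ := Finset.mem_image.mp (hu_sub hy)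
      exact ⟨x, hx⟩
    choose g hg using hsec
    set s0 : Finset (Fin n) := u.attach.image (fun y => g y.1 y.2) with hs0
    have hlamg : ∀ (y : {x // x ∈ u}), lam (g y.1 y.2) = y.1 := fun y => hg y.1 y.2
    have hinj : Set.InjOn (fun y : {x // x ∈ u} => g y.1 y.2) u.attach := by
      intro a _ b _ hab
      have : (a : ℝ) = b := by
        rw [← hlamg a, ← hlamg b]; exact congrArg lam hab
      exact Subtype.ext this
    have hcard0 : s0.card = n - k := by
      rw [hs0, Finset.card_image_of_injOn hinj, Finset.card_attach, hu_card]
    have hinjlam : Set.InjOn lam s0 := by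
      intro a ha b hb hab
      simp only [hs0, Finset.coe_image, Set.mem_image] at ha hb
      obtain ⟨ya, -, rfl⟩ := ha
      obtain ⟨yb, -, rfl⟩ := hb
      have : (ya : ℝ) = yb := by rw [← hlamg ya, ← hlamg yb]; exact hab
      have hyy : ya = yb := Subtype.ext this
      rw [hyy]
    have hs0mem : s0 ∈ Finset.powersetCard (n - k) (Finset.univ : Finset (Fin n)) := by
      rw [Finset.mem_powersetCard_univ]; exact hcard0
    have hzero := h s0 hs0mem
    have hpos : 0 < ∏ p ∈ (s0 ×ˢ s0).filter (fun p => p.1 < p.2), (lam p.1 - lam p.2) ^ 2 := by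
      apply Finset.prod_pos
      intro p hp
      simp only [Finset.mem_filter, Finset.mem_product] at hp
      have hne : lam p.1 ≠ lam p.2 := by
        intro e
        exact absurd (hinjlam (Finset.mem_coe.mpr hp.1.1) (Finset.mem_coe.mpr hp.1.2) e)
          (ne_of_lt hp.2)
      have : lam p.1 - lam p.2 ≠ 0 := sub_ne_zero.mpr hne
      positivity
    linarith
  · intro hcard s hs
    rw [Finset.mem_powersetCard_univ] at hs
    have hlt : (Finset.univ.image lam).card < s.card := by omega
    obtain ⟨i, hi, j, hj, hij, heq⟩ :=
      Finset.exists_ne_map_eq_of_card_lt_of_maps_to hlt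
        (fun x _ => Finset.mem_image_of_mem lam (Finset.mem_univ x))
    rcases lt_or_gt_of_ne hij with hlt' | hlt'
    · apply Finset.prod_eq_zero (i := (i, j))
      · simp [Finset.mem_filter, Finset.mem_product, hi, hj, hlt']
      · simp [sub_eq_zero.mpr heq]
    · apply Finset.prod_eq_zero (i := (j, i))
      · simp [Finset.mem_filter, Finset.mem_product, hi, hj, hlt']
      · simp [sub_eq_zero.mpr heq.symm]
end

section
/- Let N be the space of trace-zero real symmetric n×n matrices, and for a real symmetric matrix A define T_k(A) := ⋀_{i=1}^{n−k−1} (Aⁱ − (1/n)·Tr(Aⁱ)·I) ∈ ⋀^{n−k−1} N. Then T_k(A) = 0 if and only if A has at most n−k−1 distinct eigenvalues. -/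
open ExteriorAlgebra in
lemma iMulti_eq_zero_iff {K M : Type*} [Field K] [AddCommGroup M] [Module K M]
    {m : ℕ} (v : Fin m → M) :
    ExteriorAlgebra.ιMulti K m v = 0 ↔ ¬ LinearIndependent K v := by
  constructor
  · intro h hindep
    classical
    set L : (Fin m → K) →ₗ[K] M :=
      LinearMap.lsum K (fun _ ↦ K) ℕ fun i ↦ LinearMap.id.smulRight (v i) with hL
    have hker : LinearMap.ker L = ⊥ := (Fintype.linearIndependent_iff').mp hindep
    obtain ⟨φ, hφ⟩ := L.exists_leftInverse_of_injective hker
    have hφv : ∀ j, φ (v j) = Pi.single j 1 := by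
      intro j
      have hLv : L (Pi.single j 1) = v j := by
        simp [hL, LinearMap.lsum_apply, Pi.single_apply]
      rw [← hLv, ← LinearMap.comp_apply, hφ, LinearMap.id_apply]
    set f : M [⋀^Fin m]→ₗ[K] K :=
      (Matrix.detRowAlternating (n := Fin m) (R := K)).compLinearMap φ with hf
    set F : ∀ i, M [⋀^Fin i]→ₗ[K] K :=
      Function.update (fun i => (0 : M [⋀^Fin i]→ₗ[K] K)) m f with hF
    have h0 := congrArg (ExteriorAlgebra.liftAlternating F) h
    rw [ExteriorAlgebra.liftAlternating_apply_ιMulti, map_zero] at h0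
    have hFm : F m = f := by rw [hF]; simp
    rw [hFm] at h0
    have : (Matrix.of fun j i => φ (v j) i).det = 0 := h0
    rw [show (Matrix.of fun j i => φ (v j) i) = (1 : Matrix (Fin m) (Fin m) K) by
      ext j i
      simp [hφv, Pi.single_apply, Matrix.one_apply, eq_comm]] at this
    simp at this
  · intro h
    exact (ExteriorAlgebra.ιMulti K m).map_linearDependent v h

open Matrix Polynomial in
lemma powers_rel_iff_eigen {n : ℕ} (A : Matrix (Fin n) (Fin n) ℝ) (hA : A.IsHermitian)
    {N : ℕ} (g : Fin N → ℝ) :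
    (∑ i : Fin N, g i • A ^ (i : ℕ)) = 0 ↔
      ∀ j, (∑ i : Fin N, g i * hA.eigenvalues j ^ (i : ℕ)) = 0 := by
  classical
  set e := hA.eigenvalues
  set Um : Matrix (Fin n) (Fin n) ℝ := (hA.eigenvectorUnitary : Matrix (Fin n) (Fin n) ℝ)
  have hU1 : star Um * Um = 1 := Unitary.coe_star_mul_self _
  have hU2 : Um * star Um = 1 := Unitary.coe_mul_star_self _
  have hsp : A = Um * Matrix.diagonal e * star Um := by
    have := hA.spectral_theorem
    simpa [Um, e] using this
  have hmul : ∀ X Y : Matrix (Fin n) (Fin n) ℝ,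
      (Um * X * star Um) * (Um * Y * star Um) = Um * (X * Y) * star Um := by
    intro X Y
    simp only [mul_assoc]
    rw [← mul_assoc (star Um) Um, hU1, one_mul]
  have hpow : ∀ i : ℕ, A ^ i = Um * (Matrix.diagonal e) ^ i * star Um := by
    intro i
    induction i with
    | zero => simp [hU2]
    | succ i ih => rw [pow_succ, ih, hsp, hmul, ← pow_succ]
  have hsum : (∑ i : Fin N, g i • A ^ (i : ℕ)) =
      Um * Matrix.diagonal (fun j => ∑ i : Fin N, g i * e j ^ (i : ℕ)) * star Um := by
    have h1 : (∑ i : Fin N, g i • A ^ (i : ℕ)) =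
        Um * (∑ i : Fin N, g i • (Matrix.diagonal e) ^ (i : ℕ)) * star Um := by
      rw [Finset.mul_sum, Finset.sum_mul]
      exact Finset.sum_congr rfl fun i _ => by
        rw [hpow, Matrix.mul_smul, Matrix.smul_mul]
    rw [h1]
    congr 2
    ext j l
    rcases eq_or_ne j l with rfl | hne
    · simp [Matrix.diagonal_pow, Matrix.sum_apply, Matrix.diagonal_apply_eq]
    · simp [Matrix.diagonal_pow, Matrix.sum_apply, Matrix.diagonal_apply_ne _ hne]
  rw [hsum]
  constructor
  · intro h j
    have h2 : star Um * (Um * Matrix.diagonal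
        (fun j => ∑ i : Fin N, g i * e j ^ (i : ℕ)) * star Um) * Um = 0 := by
      rw [h]; simp
    rw [show star Um * (Um * Matrix.diagonal
        (fun j => ∑ i : Fin N, g i * e j ^ (i : ℕ)) * star Um) * Um
        = Matrix.diagonal (fun j => ∑ i : Fin N, g i * e j ^ (i : ℕ)) by
      simp only [mul_assoc]
      rw [hU1, mul_one, ← mul_assoc (star Um) Um, hU1, one_mul]] at h2
    simpa using congrFun (congrFun h2 j) j
  · intro h
    rw [show (fun j => ∑ i : Fin N, g i * e j ^ (i : ℕ)) = fun _ => (0 : ℝ) from funext h]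
    simp

open Matrix Polynomial in
lemma poly_rel_iff_card {n m : ℕ} (e : Fin n → ℝ) :
    (∃ g : Fin (m + 1) → ℝ, (∀ j, (∑ i : Fin (m + 1), g i * e j ^ (i : ℕ)) = 0) ∧ g ≠ 0) ↔
      (Finset.univ.image e).card ≤ m := by
  classical
  set s := Finset.univ.image e with hs
  constructor
  · rintro ⟨g, hg, hg0⟩
    by_contra hcard
    push_neg at hcard
    have hcard' : m + 1 ≤ s.card := hcard
    obtain ⟨t, hts, ht⟩ := Finset.exists_subset_card_eq hcard'
    set w : Fin (m + 1) → ℝ := fun i => (t.orderIsoOfFin ht i : ℝ) with hw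
    have hwinj : Function.Injective w := fun a b hab =>
      (t.orderIsoOfFin ht).injective (Subtype.ext hab)
    have hV : (Matrix.vandermonde w).det ≠ 0 :=
      Matrix.det_vandermonde_ne_zero_iff.mpr hwinj
    have hmv : Matrix.vandermonde w *ᵥ g = 0 := by
      funext i
      have hwi : w i ∈ s := hts (t.orderIsoOfFin ht i).2
      obtain ⟨j, _, hj⟩ := Finset.mem_image.mp hwi
      have := hg j
      rw [hj] at this
      simpa [Matrix.mulVec, Matrix.vandermonde, dotProduct, mul_comm] using this
    exact hg0 (Matrix.eq_zero_of_mulVec_eq_zero hV hmv)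
  · intro hcard
    set q : ℝ[X] := ∏ μ ∈ s, (X - C μ) with hq
    have hqm : q.Monic := monic_prod_of_monic _ _ fun μ _ => monic_X_sub_C μ
    have hqdeg : q.natDegree = s.card := by
      rw [hq, natDegree_prod_of_monic _ _ fun μ _ => monic_X_sub_C μ]
      simp
    refine ⟨fun i => q.coeff i, fun j => ?_, ?_⟩
    · have hev : q.eval (e j) = 0 := by
        rw [hq, eval_prod]
        exact Finset.prod_eq_zero (Finset.mem_image_of_mem e (Finset.mem_univ j))
          (by simp)
      have hlt : q.natDegree < m + 1 := by omega
      rw [← hev, eval_eq_sum_range' hlt, ← Fin.sum_univ_eq_sum_range]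
    · intro h0
      have h1 : q.coeff q.natDegree = 1 := hqm.coeff_natDegree
      have h2 : q.coeff (⟨q.natDegree, by omega⟩ : Fin (m + 1)) = 0 := congrFun h0 _
      rw [h1] at h2
      exact one_ne_zero h2

/-- `T_k(A) := ⋀_{i=1}^{n−k−1} (Aⁱ − (1/n)·Tr(Aⁱ)·I)` vanishes iff the real symmetric
matrix `A` has at most `n−k−1` distinct eigenvalues. (The wedge is taken in the exterior
algebra of the space of matrices; the factors are trace-zero symmetric matrices.) -/
theorem stmt13 (n k : ℕ) (hn : 2 ≤ n) (hk : k ≤ n - 2)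
    (A : Matrix (Fin n) (Fin n) ℝ) (hA : A.IsHermitian) :
    ExteriorAlgebra.ιMulti ℝ (n - k - 1)
        (fun i : Fin (n - k - 1) =>
          A ^ ((i : ℕ) + 1) -
            ((Matrix.trace (A ^ ((i : ℕ) + 1)) / n) • (1 : Matrix (Fin n) (Fin n) ℝ))) = 0 ↔
      (Finset.univ.image hA.eigenvalues).card ≤ n - k - 1 := by
  classical
  set m := n - k - 1 with hm
  have hn0 : (n : ℝ) ≠ 0 := by positivity
  set c : Fin m → ℝ := fun i => Matrix.trace (A ^ ((i : ℕ) + 1)) / n with hc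
  set v : Fin m → Matrix (Fin n) (Fin n) ℝ := fun i =>
    A ^ ((i : ℕ) + 1) - (c i • (1 : Matrix (Fin n) (Fin n) ℝ)) with hv
  rw [iMulti_eq_zero_iff, ← poly_rel_iff_card (m := m) hA.eigenvalues]
  have hone : (1 : Matrix (Fin n) (Fin n) ℝ) ≠ 0 := by
    intro h
    have := congrFun (congrFun h ⟨0, by omega⟩) ⟨0, by omega⟩
    simp [Matrix.one_apply] at this
  constructor
  · intro hdep
    obtain ⟨g', hsum, i₀, hi₀⟩ := Fintype.not_linearIndependent_iff.mp hdep
    have hrel : (∑ i : Fin m, g' i • A ^ ((i : ℕ) + 1)) =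
        (∑ i : Fin m, g' i * c i) • (1 : Matrix (Fin n) (Fin n) ℝ) := by
      have hx : ∑ i : Fin m, g' i • v i =
          (∑ i : Fin m, g' i • A ^ ((i : ℕ) + 1)) -
            (∑ i : Fin m, g' i * c i) • (1 : Matrix (Fin n) (Fin n) ℝ) := by
        rw [Finset.sum_smul, ← Finset.sum_sub_distrib]
        exact Finset.sum_congr rfl fun i _ => by
          rw [hv, smul_sub, smul_smul]
      rw [hsum] at hx
      linear_combination (norm := module) -hx
    set g : Fin (m + 1) → ℝ :=
      Fin.cases (-(∑ i : Fin m, g' i * c i)) g' with hg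
    have hsum0 : ∑ i : Fin (m + 1), g i • A ^ (i : ℕ) = 0 := by
      rw [Fin.sum_univ_succ]
      simp only [hg, Fin.cases_zero, Fin.cases_succ, Fin.val_succ, Fin.val_zero, pow_zero]
      rw [hrel, neg_smul, neg_add_cancel]
    refine ⟨g, (powers_rel_iff_eigen A hA g).mp hsum0, fun h0 => hi₀ ?_⟩
    have := congrFun h0 i₀.succ
    simpa [hg] using this
  · rintro ⟨g, hg, hg0⟩
    have hsum0 : ∑ i : Fin (m + 1), g i • A ^ (i : ℕ) = 0 :=
      (powers_rel_iff_eigen A hA g).mpr hg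
    rw [Fin.sum_univ_succ] at hsum0
    simp only [Fin.val_succ, Fin.val_zero, pow_zero] at hsum0
    set g' : Fin m → ℝ := fun i => g i.succ with hg'
    have hrel : (∑ i : Fin m, g' i • A ^ ((i : ℕ) + 1)) =
        (-(g 0)) • (1 : Matrix (Fin n) (Fin n) ℝ) := by
      rw [neg_smul, eq_neg_iff_add_eq_zero, add_comm]
      exact hsum0
    have hvsum : ∑ i : Fin m, g' i • v i =
        (-(g 0) - ∑ i : Fin m, g' i * c i) • (1 : Matrix (Fin n) (Fin n) ℝ) := by
      have hx : ∑ i : Fin m, g' i • v i =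
          (∑ i : Fin m, g' i • A ^ ((i : ℕ) + 1)) -
            (∑ i : Fin m, g' i * c i) • (1 : Matrix (Fin n) (Fin n) ℝ) := by
        rw [Finset.sum_smul, ← Finset.sum_sub_distrib]
        exact Finset.sum_congr rfl fun i _ => by
          rw [hv, smul_sub, smul_smul]
      rw [hx, hrel, sub_smul]
    have htr : Matrix.trace (∑ i : Fin m, g' i • v i) = 0 := by
      rw [Matrix.trace_sum]
      apply Finset.sum_eq_zero
      intro i _
      rw [Matrix.trace_smul, hv]
      simp only [Matrix.trace_sub, Matrix.trace_smul, Matrix.trace_one, hc]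
      rw [smul_eq_mul, smul_eq_mul]
      field_simp
      simp
    have hscal : (-(g 0) - ∑ i : Fin m, g' i * c i) = 0 := by
      rw [hvsum, Matrix.trace_smul, Matrix.trace_one, smul_eq_mul] at htr
      have : (Fintype.card (Fin n) : ℝ) ≠ 0 := by simp [hn0]
      exact (mul_eq_zero.mp htr).resolve_right this
    rw [hscal, zero_smul] at hvsum
    refine Fintype.not_linearIndependent_iff.mpr ⟨g', hvsum, ?_⟩
    by_contra hall
    push_neg at hall
    apply hg0
    have hg0' : g 0 = 0 := by
      have : g 0 • (1 : Matrix (Fin n) (Fin n) ℝ) = 0 := by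
        rw [← hsum0]
        rw [show ∑ i : Fin m, g i.succ • A ^ ((i : ℕ) + 1) = 0 from
          Finset.sum_eq_zero fun i _ => by rw [show g i.succ = 0 from hall i, zero_smul]]
        rw [add_zero]
      rcases smul_eq_zero.mp this with h | h
      · exact h
      · exact absurd h hone
    funext i
    refine Fin.cases hg0' (fun i => hall i) i
end

section
/- A real symmetric n×n matrix A has at most n−k−1 distinct eigenvalues if and only if the matrices A − (1/n)Tr(A)I, A² − (1/n)Tr(A²)I, …, A^{n−k−1} − (1/n)Tr(A^{n−k−1})I are linearly dependent over ℝ. -/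
open Matrix Polynomial

lemma aux_conj {n : ℕ} (A : Matrix (Fin n) (Fin n) ℝ) (hA : A.IsHermitian) (j : ℕ) :
    star (hA.eigenvectorUnitary : Matrix (Fin n) (Fin n) ℝ) * A ^ j *
      (hA.eigenvectorUnitary : Matrix (Fin n) (Fin n) ℝ) = (Matrix.diagonal hA.eigenvalues) ^ j := by
  set U := (hA.eigenvectorUnitary : Matrix (Fin n) (Fin n) ℝ) with hUdef
  have hU : star U * U = 1 := Unitary.coe_star_mul_self _
  have hU' : U * star U = 1 := Unitary.coe_mul_star_self _
  have base : star U * A * U = Matrix.diagonal hA.eigenvalues := by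
    have := hA.conjStarAlgAut_star_eigenvectorUnitary
    simpa [Unitary.conjStarAlgAut_apply, Function.comp_def] using this
  induction j with
  | zero => simpa using hU
  | succ j ih =>
      rw [pow_succ, pow_succ, ← ih, ← base]
      simp only [mul_assoc]
      rw [← mul_assoc U (star U), hU', one_mul]

lemma aux_pow {n : ℕ} (A : Matrix (Fin n) (Fin n) ℝ) (hA : A.IsHermitian) (j : ℕ) :
    A ^ j = (hA.eigenvectorUnitary : Matrix (Fin n) (Fin n) ℝ) *
      (Matrix.diagonal hA.eigenvalues) ^ j * star (hA.eigenvectorUnitary : Matrix (Fin n) (Fin n) ℝ) := by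
  have hU : (hA.eigenvectorUnitary : Matrix (Fin n) (Fin n) ℝ) * star (hA.eigenvectorUnitary : Matrix (Fin n) (Fin n) ℝ) = 1 := Unitary.coe_mul_star_self _
  rw [← aux_conj A hA j, mul_assoc, mul_assoc, hU, mul_one, ← mul_assoc, hU, one_mul]

lemma aux_trace {n : ℕ} (A : Matrix (Fin n) (Fin n) ℝ) (hA : A.IsHermitian) (j : ℕ) :
    Matrix.trace (A ^ j) = ∑ i, hA.eigenvalues i ^ j := by
  rw [aux_pow A hA j, Matrix.trace_mul_cycle, Unitary.coe_star_mul_self, one_mul,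
    Matrix.diagonal_pow, Matrix.trace_diagonal]
  simp

lemma aux_comb {n : ℕ} (A : Matrix (Fin n) (Fin n) ℝ) (hA : A.IsHermitian)
    {m : ℕ} (c : Fin m → ℝ) (r : ℝ) :
    (∑ i, c i • A ^ ((i:ℕ)+1)) = r • (1 : Matrix (Fin n) (Fin n) ℝ) ↔
      ∀ j, ∑ i, c i * hA.eigenvalues j ^ ((i:ℕ)+1) = r := by
  set U := (hA.eigenvectorUnitary : Matrix (Fin n) (Fin n) ℝ)
  have hU : star U * U = 1 := Unitary.coe_star_mul_self _
  have hU' : U * star U = 1 := Unitary.coe_mul_star_self _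
  have hdiag : (∑ i, c i • (Matrix.diagonal hA.eigenvalues)^((i:ℕ)+1)) =
      Matrix.diagonal (fun j => ∑ i, c i * hA.eigenvalues j ^ ((i:ℕ)+1)) := by
    ext a b
    by_cases h : a = b <;>
      simp [Matrix.sum_apply, Matrix.diagonal_pow, Matrix.diagonal_apply, h]
  have key : (∑ i, c i • A ^ ((i:ℕ)+1)) =
      U * Matrix.diagonal (fun j => ∑ i, c i * hA.eigenvalues j ^ ((i:ℕ)+1)) * star U := by
    calc ∑ i, c i • A ^ ((i:ℕ)+1)
        = ∑ i : Fin m, U * (c i • (Matrix.diagonal hA.eigenvalues) ^ ((i:ℕ)+1)) * star U := by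
          refine Finset.sum_congr rfl fun i _ => ?_
          rw [aux_pow A hA, Matrix.mul_smul, Matrix.smul_mul]
      _ = U * (∑ i : Fin m, c i • (Matrix.diagonal hA.eigenvalues) ^ ((i:ℕ)+1)) * star U := by
          rw [← Finset.sum_mul, ← Finset.mul_sum]
      _ = _ := by rw [hdiag]
  have hone : r • (1 : Matrix (Fin n) (Fin n) ℝ) =
      U * Matrix.diagonal (fun _ => r) * star U := by
    have h1 : Matrix.diagonal (fun _ : Fin n => r) = r • 1 := by
      ext a b
      by_cases h : a = b <;> simp [Matrix.diagonal_apply, Matrix.one_apply, h]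
    rw [h1, Matrix.mul_smul, Matrix.smul_mul, mul_one, hU']
  have e : ∀ X : Matrix (Fin n) (Fin n) ℝ, star U * (U * X * star U) * U = X := by
    intro X
    simp only [← mul_assoc]
    rw [hU, one_mul, mul_assoc, hU, mul_one]
  rw [key, hone]
  constructor
  · intro h j
    have h2 : Matrix.diagonal (fun j => ∑ i, c i * hA.eigenvalues j ^ ((i:ℕ)+1)) =
        Matrix.diagonal (fun _ : Fin n => r) := by
      rw [← e (Matrix.diagonal (fun j => ∑ i, c i * hA.eigenvalues j ^ ((i:ℕ)+1))), h, e]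
    exact congrFun (Matrix.diagonal_injective h2) j
  · intro h
    have : (fun j => ∑ i, c i * hA.eigenvalues j ^ ((i:ℕ)+1)) = fun _ : Fin n => r := funext h
    rw [this]

lemma aux_expand {n m : ℕ} (A : Matrix (Fin n) (Fin n) ℝ) (g t : Fin m → ℝ) :
    ∑ i, g i • (A ^ ((i:ℕ)+1) - t i • (1 : Matrix (Fin n) (Fin n) ℝ)) =
      (∑ i, g i • A ^ ((i:ℕ)+1)) - (∑ i, g i * t i) • (1 : Matrix (Fin n) (Fin n) ℝ) := by
  rw [Finset.sum_smul]
  simp [smul_sub, Finset.sum_sub_distrib, smul_smul]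




/-- A real symmetric `n×n` matrix `A` has at most `n−k−1` distinct eigenvalues iff the
matrices `Aⁱ − (1/n)Tr(Aⁱ)I`, `i = 1,…,n−k−1`, are linearly dependent over `ℝ`. -/
theorem stmt14 (n k : ℕ) (hn : 2 ≤ n) (hk : k ≤ n - 2)
    (A : Matrix (Fin n) (Fin n) ℝ) (hA : A.IsHermitian) :
    (Finset.univ.image hA.eigenvalues).card ≤ n - k - 1 ↔
      ¬ LinearIndependent ℝ (fun i : Fin (n - k - 1) =>
          A ^ ((i : ℕ) + 1) -
            ((Matrix.trace (A ^ ((i : ℕ) + 1)) / n) • (1 : Matrix (Fin n) (Fin n) ℝ))) := by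
  set m := n - k - 1 with hm
  have hm1 : 1 ≤ m := by omega
  have hnR : (n : ℝ) ≠ 0 := by positivity
  set S := Finset.univ.image hA.eigenvalues with hS
  set lam := hA.eigenvalues with hlam
  set t : Fin m → ℝ := fun i => Matrix.trace (A ^ ((i:ℕ)+1)) / n with ht
  rw [Fintype.not_linearIndependent_iff]
  constructor
  · intro hcard
    -- p = ∏ (X - μ) over distinct eigenvalues
    set p : Polynomial ℝ := ∏ μ ∈ S, (Polynomial.X - Polynomial.C μ) with hp
    have hmonic : p.Monic := Polynomial.monic_prod_of_monic S _
      (fun μ _ => Polynomial.monic_X_sub_C μ)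
    have hdeg : p.natDegree = S.card := by
      rw [hp, Polynomial.natDegree_prod_of_monic S _ (fun μ _ => Polynomial.monic_X_sub_C μ)]
      simp [Polynomial.natDegree_X_sub_C]
    have hd1 : 1 ≤ S.card := by
      exact Finset.card_pos.mpr ⟨lam ⟨0, by omega⟩, Finset.mem_image_of_mem _ (Finset.mem_univ _)⟩
    have heval : ∀ j : Fin n, p.eval (lam j) = 0 := by
      intro j
      rw [hp, Polynomial.eval_prod]
      exact Finset.prod_eq_zero (Finset.mem_image_of_mem _ (Finset.mem_univ j)) (by simp [hlam])
    set g : Fin m → ℝ := fun i => p.coeff ((i:ℕ)+1) with hg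
    -- eigenvalue-wise identity
    have hsum : ∀ j : Fin n, ∑ i : Fin m, g i * lam j ^ ((i:ℕ)+1) = -p.coeff 0 := by
      intro j
      have h1 : p.natDegree < m + 1 := by omega
      have h2 := Polynomial.eval_eq_sum_range' h1 (lam j)
      rw [heval j, Finset.sum_range_succ'] at h2
      have h3 : ∑ i ∈ Finset.range m, p.coeff (i+1) * lam j ^ (i+1) = -(p.coeff 0) := by
        have := h2.symm
        simp only [pow_zero, mul_one] at this
        linarith
      rw [← h3, Fin.sum_univ_eq_sum_range (fun i => p.coeff (i+1) * lam j ^ (i+1)) m]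
    have hAsum : (∑ i : Fin m, g i • A ^ ((i:ℕ)+1)) =
        (-p.coeff 0) • (1 : Matrix (Fin n) (Fin n) ℝ) :=
      (aux_comb A hA g (-p.coeff 0)).mpr hsum
    have htr : (∑ i : Fin m, g i * t i) = -p.coeff 0 := by
      have swap : ∑ i : Fin m, g i * (∑ j : Fin n, lam j ^ ((i:ℕ)+1)) =
          ∑ j : Fin n, ∑ i : Fin m, g i * lam j ^ ((i:ℕ)+1) := by
        rw [Finset.sum_comm]
        simp [Finset.mul_sum]
      have : ∑ i : Fin m, g i * t i = (∑ j : Fin n, (-p.coeff 0)) / n := by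
        simp only [ht, aux_trace A hA, div_eq_mul_inv, ← mul_assoc]
        rw [← Finset.sum_mul, swap]
        congr 1
        exact Finset.sum_congr rfl fun j _ => hsum j
      rw [this]
      field_simp
      rw [Finset.sum_const, Finset.card_univ, Fintype.card_fin, nsmul_eq_mul]; ring
    refine ⟨g, ?_, ?_⟩
    · rw [aux_expand, htr, hAsum, sub_self]
    · refine ⟨⟨S.card - 1, by omega⟩, ?_⟩
      have : ((⟨S.card - 1, by omega⟩ : Fin m) : ℕ) + 1 = S.card := by simp; omega
      rw [hg]
      simp only [this]
      rw [← hdeg, hmonic.coeff_natDegree]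
      exact one_ne_zero
  · rintro ⟨g, hzero, i0, hi0⟩
    by_contra hcard
    push_neg at hcard
    have hAsum : (∑ i : Fin m, g i • A ^ ((i:ℕ)+1)) =
        (∑ i : Fin m, g i * t i) • (1 : Matrix (Fin n) (Fin n) ℝ) := by
      rw [aux_expand] at hzero
      exact sub_eq_zero.mp hzero
    have hsum := (aux_comb A hA g (∑ i : Fin m, g i * t i)).mp hAsum
    set r := ∑ i : Fin m, g i * t i with hr
    set q : Polynomial ℝ :=
      (∑ i : Fin m, Polynomial.C (g i) * Polynomial.X ^ ((i:ℕ)+1)) - Polynomial.C r with hq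
    have hqdeg : q.natDegree ≤ m := by
      refine le_trans (Polynomial.natDegree_sub_le _ _) (max_le ?_ (by simp))
      refine Polynomial.natDegree_sum_le_of_forall_le _ _ fun i _ => ?_
      refine le_trans (Polynomial.natDegree_C_mul_le _ _) ?_
      simp [Polynomial.natDegree_X_pow]
    have hqeval : ∀ μ ∈ S, q.eval μ = 0 := by
      intro μ hμ
      obtain ⟨j, _, hj⟩ := Finset.mem_image.mp hμ
      subst hj
      simp only [hq, Polynomial.eval_sub, Polynomial.eval_finset_sum, Polynomial.eval_mul,
        Polynomial.eval_C, Polynomial.eval_pow, Polynomial.eval_X]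
      rw [hsum j]
      ring
    have hq0 : q = 0 :=
      Polynomial.eq_zero_of_natDegree_lt_card_of_eval_eq_zero' q S hqeval (by omega)
    have : q.coeff ((i0:ℕ)+1) = g i0 := by
      rw [hq, Polynomial.coeff_sub, Polynomial.finset_sum_coeff]
      have hC : (Polynomial.C r).coeff ((i0:ℕ)+1) = 0 := by
        rw [Polynomial.coeff_C]; simp
      rw [hC, sub_zero]
      rw [Finset.sum_eq_single i0]
      · simp [Polynomial.coeff_C_mul, Polynomial.coeff_X_pow]
      · intro b _ hb
        rw [Polynomial.coeff_C_mul, Polynomial.coeff_X_pow, if_neg, mul_zero]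
        intro hcontra
        exact hb (Fin.ext (by omega))
      · intro h; exact absurd (Finset.mem_univ i0) h
    rw [hq0] at this
    simp at this
    exact hi0 this.symm
end

section
/- The minimal degree of a non-zero homogeneous polynomial function on the space of n×n real symmetric matrices that vanishes on the set E_k of symmetric matrices with at most n−k−1 distinct eigenvalues is (n−k)(n−k−1)/2. -/
open MvPolynomial Matrix

namespace Stmt15Aux


/-- substitution kills a polynomial that vanishes at all induced real points -/
lemma eval₂_C_eq_zero_of_vanish {σ τ : Type*} (p : MvPolynomial σ ℝ)
    (u : σ → MvPolynomial τ ℝ)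
    (hv : ∀ z : τ → ℝ, eval (fun b => eval z (u b)) p = 0) :
    eval₂ C u p = 0 := by
  apply MvPolynomial.funext (q := 0)
  intro z
  rw [map_zero, ← eval_assoc]
  exact hv z

lemma homogeneousComponent_totalDegree_ne_zero {σ : Type*} {q : MvPolynomial σ ℝ}
    (hq : q ≠ 0) : homogeneousComponent q.totalDegree q ≠ 0 := by
  obtain ⟨d, hd, h⟩ := Finset.exists_mem_eq_sup q.support (support_nonempty.mpr hq)
    (fun s : σ →₀ ℕ => s.sum fun _ e => e)
  intro h0
  have hc : coeff d (homogeneousComponent q.totalDegree q) = coeff d q := by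
    rw [coeff_homogeneousComponent]
    rw [if_pos (by simpa [Finsupp.degree_apply, Finsupp.sum, MvPolynomial.totalDegree] using h.symm)]
  rw [h0] at hc
  exact (mem_support_iff.mp hd) hc.symm

lemma totalDegree_homog_mul {σ : Type*} {v q : MvPolynomial σ ℝ} {c : ℕ}
    (hv : v.IsHomogeneous c) (hv0 : v ≠ 0) (hq : q ≠ 0) :
    c + q.totalDegree ≤ (v * q).totalDegree := by
  by_contra hlt
  push_neg at hlt
  have hcz := homogeneousComponent_eq_zero (c + q.totalDegree) (v * q) hlt
  have hcomp : homogeneousComponent (c + q.totalDegree) (v * q)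
      = v * homogeneousComponent q.totalDegree q := by
    conv_lhs => rw [show v * q = ∑ i ∈ Finset.range (q.totalDegree + 1),
      v * homogeneousComponent i q by rw [← Finset.mul_sum, sum_homogeneousComponent]]
    rw [map_sum]
    rw [Finset.sum_eq_single_of_mem q.totalDegree (Finset.self_mem_range_succ _)]
    · rw [homogeneousComponent_of_mem
        ((mem_homogeneousSubmodule _ _).mpr (hv.mul (homogeneousComponent_isHomogeneous _ q)))]
      simp
    · intro i hi hne
      rw [homogeneousComponent_of_mem
        ((mem_homogeneousSubmodule _ _).mpr (hv.mul (homogeneousComponent_isHomogeneous _ q)))]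
      rw [if_neg (by omega)]
  rw [hcz] at hcomp
  exact (mul_ne_zero hv0 (homogeneousComponent_totalDegree_ne_zero hq)) hcomp.symm



/-- Kleitman–Lovász Vandermonde bound: a nonzero polynomial vanishing whenever two
coordinates indexed by `s` coincide has total degree at least `s.card.choose 2`. -/
lemma vd {M : ℕ} : ∀ (c : ℕ) (s : Finset (Fin M)) (h : MvPolynomial (Fin M) ℝ),
    s.card = c → h ≠ 0 →
    (∀ y : Fin M → ℝ, (∃ a ∈ s, ∃ b ∈ s, a ≠ b ∧ y a = y b) → eval y h = 0) →
    c.choose 2 ≤ h.totalDegree := by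
  intro c
  induction c with
  | zero => intro s h _ _ _; simp
  | succ c IH =>
    intro s h hcard hne hvan
    obtain ⟨i, hi⟩ : ∃ i, i ∈ s := Finset.card_pos.mp (by omega)
    set t : Finset (Fin M) := s.erase i with ht
    have htc : t.card = c := by rw [ht, Finset.card_erase_of_mem hi, hcard]; omega
    -- the algebra equivalence separating out the variable `i`
    set e : MvPolynomial (Fin M) ℝ ≃ₐ[ℝ]
        Polynomial (MvPolynomial {b : Fin M // b ≠ i} ℝ) :=
      (renameEquiv ℝ (Equiv.optionSubtypeNe i).symm).trans
        (optionEquivLeft ℝ {b : Fin M // b ≠ i}) with he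
    have heXi : e (X i) = Polynomial.X := by
      simp [he, renameEquiv_apply, rename_X, Equiv.optionSubtypeNe_symm_self,
        optionEquivLeft_X_none]
    have heXb : ∀ (b : Fin M) (hb : b ≠ i),
        e (X b) = Polynomial.C (X ⟨b, hb⟩) := by
      intro b hb
      simp [he, renameEquiv_apply, rename_X, Equiv.optionSubtypeNe_symm_of_ne hb,
        optionEquivLeft_X_some]
    have heC : ∀ r : ℝ, e (C r) = Polynomial.C (C r) := by
      intro r
      simp [he, renameEquiv_apply, optionEquivLeft_C]
    set H := e h with hH
    have hHne : H ≠ 0 := by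
      intro h0
      exact hne (by simpa using e.injective (h0.trans (map_zero e).symm))
    -- each X ⟨a⟩, a ∈ t, is a root of H
    have hroot : ∀ a : {x // x ∈ t}, Polynomial.IsRoot H
        (X ⟨a.1, Finset.ne_of_mem_erase a.2⟩) := by
      intro ⟨a, hat⟩
      have hai : a ≠ i := Finset.ne_of_mem_erase hat
      set ρ : MvPolynomial (Fin M) ℝ →+* MvPolynomial {b : Fin M // b ≠ i} ℝ :=
        (Polynomial.evalRingHom (X ⟨a, hai⟩)).comp e.toAlgHom.toRingHom with hρ
      set u : Fin M → MvPolynomial {b : Fin M // b ≠ i} ℝ :=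
        fun b => if hb : b = i then X ⟨a, hai⟩ else X ⟨b, hb⟩ with hu
      have hρ2 : ρ = eval₂Hom MvPolynomial.C u := by
        apply MvPolynomial.ringHom_ext
        · intro r
          simp [hρ, heC]
        · intro b
          by_cases hb : b = i
          · subst hb
            simp [hρ, heXi, hu]
          · simp [hρ, heXb b hb, hu, hb]
      have hz : ρ h = 0 := by
        rw [hρ2]
        simp only [coe_eval₂Hom]
        apply eval₂_C_eq_zero_of_vanish
        intro z
        apply hvan
        refine ⟨i, hi, a, Finset.mem_of_mem_erase hat, (Ne.symm hai), ?_⟩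
        simp [hu, hai]
      simpa [hρ, Polynomial.IsRoot] using hz
    -- the multiset of those roots
    set mst : Multiset (MvPolynomial {b : Fin M // b ≠ i} ℝ) :=
      t.attach.val.map (fun a => X ⟨a.1, Finset.ne_of_mem_erase a.2⟩) with hmst
    have hnodup : mst.Nodup := by
      refine Multiset.Nodup.map_on ?_ t.attach.nodup
      intro a _ b _ hab
      have h2 := congrArg Subtype.val (X_injective (R := ℝ) (σ := {b : Fin M // b ≠ i}) hab)
      exact Subtype.ext h2
    have hle : mst ≤ H.roots := by
      rw [Multiset.le_iff_count]
      intro r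
      by_cases hr : r ∈ mst
      · have h1 : Multiset.count r mst ≤ 1 := (Multiset.nodup_iff_count_le_one.mp hnodup) r
        have h2 : 1 ≤ Multiset.count r H.roots := by
          rw [Multiset.one_le_count_iff_mem, Polynomial.mem_roots hHne]
          obtain ⟨a, _, rfl⟩ := Multiset.mem_map.mp hr
          exact hroot a
        omega
      · rw [Multiset.count_eq_zero_of_notMem hr]
        omega
    have hdvd : (mst.map (fun r => Polynomial.X - Polynomial.C r)).prod ∣ H :=
      dvd_trans (Multiset.prod_dvd_prod_of_le (Multiset.map_le_map hle))
        (Polynomial.prod_multiset_X_sub_C_dvd H)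
    obtain ⟨Q, hQ⟩ := hdvd
    -- pull the factorization back
    set v : MvPolynomial (Fin M) ℝ :=
      ∏ a ∈ t.attach, (X i - X a.1) with hv
    have hev : e v = (mst.map (fun r => Polynomial.X - Polynomial.C r)).prod := by
      rw [hv, map_prod]
      rw [hmst, Multiset.map_map]
      rw [Finset.prod_eq_multiset_prod]
      congr 1
      apply Multiset.map_congr rfl
      intro a _
      rw [_root_.map_sub, heXi, heXb a.1 (Finset.ne_of_mem_erase a.2)]
      rfl
    set q : MvPolynomial (Fin M) ℝ := e.symm Q with hq
    have hfact : h = v * q := by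
      apply e.injective
      rw [_root_.map_mul, hev, hq, AlgEquiv.apply_symm_apply, ← hQ]
    have hvhom : v.IsHomogeneous t.card := by
      have := IsHomogeneous.prod t.attach (fun a => (X i - X a.1 : MvPolynomial (Fin M) ℝ))
        (fun _ => 1) (fun a _ => by
          rw [sub_eq_add_neg]
          exact (isHomogeneous_X _ _).add ((isHomogeneous_X _ _).neg))
      simpa using this
    have hfne : ∀ a : {x // x ∈ t}, (X i - X a.1 : MvPolynomial (Fin M) ℝ) ≠ 0 := by
      intro a
      refine sub_ne_zero.mpr (fun hXX => ?_)
      exact (Finset.ne_of_mem_erase a.2) (X_injective hXX).symm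
    have hv0 : v ≠ 0 := Finset.prod_ne_zero_iff.mpr (fun a _ => hfne a)
    have hq0 : q ≠ 0 := by
      intro h0
      rw [h0, mul_zero] at hfact
      exact hne hfact
    -- q vanishes on the diagonals indexed by t
    have hqvan : ∀ y : Fin M → ℝ, (∃ a ∈ t, ∃ b ∈ t, a ≠ b ∧ y a = y b) →
        eval y q = 0 := by
      rintro y ⟨a0, ha0, b0, hb0, hab0, hy0⟩
      set w : Fin M → MvPolynomial (Fin M) ℝ :=
        fun b => if b = a0 then X b0 else X b with hw
      have hψh : eval₂ C w h = 0 := by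
        apply eval₂_C_eq_zero_of_vanish
        intro z
        apply hvan
        refine ⟨a0, Finset.mem_of_mem_erase ha0, b0, Finset.mem_of_mem_erase hb0, hab0, ?_⟩
        simp [hw, hab0.symm]
      have hψv : eval₂ C w v ≠ 0 := by
        rw [hv]
        rw [show (eval₂ C w (∏ a ∈ t.attach, (X i - X a.1))) =
          ∏ a ∈ t.attach, eval₂ C w (X i - X a.1) from map_prod (eval₂Hom C w) _ _]
        apply Finset.prod_ne_zero_iff.mpr
        intro a _
        have hia0 : i ≠ a0 := fun h' => (Finset.ne_of_mem_erase ha0) h'.symm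
        rw [eval₂_sub, eval₂_X, eval₂_X, hw]
        simp only [if_neg hia0]
        by_cases ha : a.1 = a0
        · rw [if_pos ha]
          exact sub_ne_zero.mpr fun hXX =>
            (Finset.ne_of_mem_erase hb0) (X_injective hXX).symm
        · rw [if_neg ha]
          exact hfne a
      have hψq : eval₂ C w q = 0 := by
        have : eval₂ C w h = eval₂ C w v * eval₂ C w q := by
          rw [hfact]; exact map_mul (eval₂Hom C w) _ _
        rw [hψh] at this
        rcases mul_eq_zero.mp this.symm with h' | h'
        · exact absurd h' hψv
        · exact h'
      have hyw : (⇑(eval y) ∘ w) = y := by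
        funext b
        by_cases hb : b = a0
        · subst hb; simp [hw, hy0]
        · simp [hw, hb]
      have : eval y q = eval y (eval₂ C w q) := by
        rw [← eval_assoc, hyw]
      rw [this, hψq, map_zero]
    have hIH := IH t q htc hq0 hqvan
    have hmul := totalDegree_homog_mul hvhom hv0 hq0
    rw [← hfact] at hmul
    have : (c + 1).choose 2 = c + c.choose 2 := by
      rw [Nat.choose_succ_succ, Nat.choose_one_right]
    omega



lemma klaux {n : ℕ} : ∀ (fuel c : ℕ), n ≤ c + fuel →
    ∀ g : MvPolynomial (Fin n) ℝ, g ≠ 0 →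
    (∀ x : Fin n → ℝ, (Finset.univ.image x).card ≤ c → eval x g = 0) →
    (c + 1).choose 2 ≤ g.totalDegree := by
  intro fuel
  induction fuel with
  | zero =>
    intro c hc g hg hvan
    exfalso
    apply hg
    apply MvPolynomial.funext (q := 0)
    intro x
    rw [map_zero]
    apply hvan
    calc (Finset.univ.image x).card ≤ (Finset.univ : Finset (Fin n)).card :=
          Finset.card_image_le
      _ = n := by simp
      _ ≤ c := by omega
  | succ fuel IH =>
    intro c hc g hg hvan
    by_cases hnc : n ≤ c
    · exfalso
      apply hg
      apply MvPolynomial.funext (q := 0)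
      intro x
      rw [map_zero]
      apply hvan
      calc (Finset.univ.image x).card ≤ (Finset.univ : Finset (Fin n)).card :=
            Finset.card_image_le
        _ = n := by simp
        _ ≤ c := hnc
    by_cases hπ : ∃ π : Fin n → Fin (c + 1), rename π g ≠ 0
    · obtain ⟨π, hπ0⟩ := hπ
      have := vd (c + 1) (Finset.univ : Finset (Fin (c + 1))) (rename π g)
        (by simp) hπ0 ?_
      · exact le_trans this (totalDegree_rename_le π g)
      · rintro y ⟨a, -, b, -, hab, hyab⟩
        rw [eval_rename]
        apply hvan
        have himy : (Finset.univ.image y).card ≤ c := by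
          have hsub : Finset.univ.image y ⊆ (Finset.univ.erase a).image y := by
            intro r hr
            obtain ⟨j, -, rfl⟩ := Finset.mem_image.mp hr
            by_cases hj : j = a
            · subst hj
              exact Finset.mem_image.mpr ⟨b, Finset.mem_erase.mpr ⟨(Ne.symm hab), Finset.mem_univ _⟩, hyab.symm⟩
            · exact Finset.mem_image.mpr ⟨j, Finset.mem_erase.mpr ⟨hj, Finset.mem_univ _⟩, rfl⟩
          calc (Finset.univ.image y).card ≤ ((Finset.univ.erase a).image y).card :=
                Finset.card_le_card hsub
            _ ≤ (Finset.univ.erase a).card := Finset.card_image_le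
            _ = c := by rw [Finset.card_erase_of_mem (Finset.mem_univ a)]; simp
        calc (Finset.univ.image (y ∘ π)).card ≤ (Finset.univ.image y).card := by
              apply Finset.card_le_card
              intro r hr
              obtain ⟨j, -, rfl⟩ := Finset.mem_image.mp hr
              exact Finset.mem_image.mpr ⟨π j, Finset.mem_univ _, rfl⟩
          _ ≤ c := himy
    · push_neg at hπ
      have hvan' : ∀ x : Fin n → ℝ, (Finset.univ.image x).card ≤ c + 1 → eval x g = 0 := by
        intro x hx
        set s := Finset.univ.image x with hs
        have he1 : ∀ j : Fin n, x j ∈ s := fun j => Finset.mem_image.mpr ⟨j, Finset.mem_univ _, rfl⟩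
        let ι : {v // v ∈ s} → Fin (c + 1) := fun v => Fin.castLE hx (s.equivFin v)
        have hιinj : Function.Injective ι := by
          intro a b hab
          apply s.equivFin.injective
          exact Fin.castLE_injective hx hab
        let π : Fin n → Fin (c + 1) := fun j => ι ⟨x j, he1 j⟩
        classical
        let y : Fin (c + 1) → ℝ := fun j =>
          if hj : ∃ v : {v // v ∈ s}, ι v = j then (hj.choose : ℝ) else 0
        have hyπ : ∀ j, y (π j) = x j := by
          intro j
          have hex : ∃ v : {v // v ∈ s}, ι v = π j := ⟨⟨x j, he1 j⟩, rfl⟩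
          simp only [y, dif_pos hex]
          have := hιinj hex.choose_spec
          rw [this]
        have hxy : (y ∘ π) = x := funext fun j => hyπ j
        have : eval x g = eval y (rename π g) := by
          rw [eval_rename, hxy]
        rw [this, hπ π, map_zero]
      have := IH (c + 1) (by omega) g hg hvan'
      calc (c + 1).choose 2 ≤ (c + 2).choose 2 := Nat.choose_le_choose 2 (by omega)
        _ ≤ g.totalDegree := this

lemma kl {n : ℕ} (c : ℕ) (g : MvPolynomial (Fin n) ℝ) (hg : g ≠ 0)
    (hvan : ∀ x : Fin n → ℝ, (Finset.univ.image x).card ≤ c → eval x g = 0) :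
    (c + 1).choose 2 ≤ g.totalDegree :=
  klaux n c (le_add_self) g hg hvan




lemma spectrum_diagonal_sub {n : ℕ} {x : Fin n → ℝ} {μ : ℝ}
    (h : μ ∈ spectrum ℝ (Matrix.diagonal x)) : ∃ t, x t = μ := by
  by_contra hc
  push_neg at hc
  rw [spectrum.mem_iff] at h
  apply h
  rw [Matrix.algebraMap_eq_diagonal]
  have : (Matrix.diagonal (algebraMap ℝ (Fin n → ℝ) μ) - Matrix.diagonal x)
      = Matrix.diagonal (fun t => μ - x t) := by
    rw [Matrix.diagonal_sub]
    rfl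
  rw [this]
  rw [Matrix.isUnit_iff_isUnit_det, Matrix.det_diagonal]
  rw [isUnit_iff_ne_zero]
  exact Finset.prod_ne_zero_iff.mpr fun t _ => sub_ne_zero.mpr fun he => hc t (by linarith)

lemma conj_diag_entry {n : ℕ} (U : Matrix (Fin n) (Fin n) ℝ) (v : Fin n → ℝ) (a b : Fin n) :
    (U * Matrix.diagonal v * star U) a b = ∑ t, U a t * U b t * v t := by
  rw [Matrix.mul_apply]
  congr 1
  funext t
  rw [Matrix.mul_diagonal]
  rw [Matrix.star_apply, star_trivial]
  ring

lemma conj_isHermitian {n : ℕ} (U : Matrix.unitaryGroup (Fin n) ℝ) (v : Fin n → ℝ) :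
    ((U : Matrix (Fin n) (Fin n) ℝ) * Matrix.diagonal v * star (U : Matrix (Fin n) (Fin n) ℝ)).IsHermitian := by
  unfold Matrix.IsHermitian
  rw [Matrix.conjTranspose_mul, Matrix.conjTranspose_mul]
  rw [show (star (U : Matrix (Fin n) (Fin n) ℝ))ᴴ = (U : Matrix (Fin n) (Fin n) ℝ) from rfl]
  rw [Matrix.diagonal_conjTranspose]
  rw [show star v = v from funext fun t => star_trivial _]
  rw [show ((U : Matrix (Fin n) (Fin n) ℝ))ᴴ = star (U : Matrix (Fin n) (Fin n) ℝ) from rfl]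
  rw [mul_assoc]

lemma conj_spectrum {n : ℕ} (U : Matrix.unitaryGroup (Fin n) ℝ) (v : Fin n → ℝ) :
    spectrum ℝ ((U : Matrix (Fin n) (Fin n) ℝ) * Matrix.diagonal v * star (U : Matrix (Fin n) (Fin n) ℝ))
      = spectrum ℝ (Matrix.diagonal v) :=
  Unitary.spectrum_star_right_conjugate

lemma conj_pow_entry {n : ℕ} (U : Matrix.unitaryGroup (Fin n) ℝ) (v : Fin n → ℝ) (j : ℕ) (a : Fin n) :
    (((U : Matrix (Fin n) (Fin n) ℝ) * Matrix.diagonal v * star (U : Matrix (Fin n) (Fin n) ℝ)) ^ j) a a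
      = ∑ t, (U : Matrix (Fin n) (Fin n) ℝ) a t * (U : Matrix (Fin n) (Fin n) ℝ) a t * v t ^ j := by
  have h1 : ((U : Matrix (Fin n) (Fin n) ℝ) * Matrix.diagonal v * star (U : Matrix (Fin n) (Fin n) ℝ)) ^ j
      = (U : Matrix (Fin n) (Fin n) ℝ) * (Matrix.diagonal v) ^ j * star (U : Matrix (Fin n) (Fin n) ℝ) := by
    have := Units.conj_pow (Unitary.toUnits U) (Matrix.diagonal v) j
    simpa using this
  rw [h1, Matrix.diagonal_pow]
  exact conj_diag_entry _ _ a a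



noncomputable def Xmat (n : ℕ) : Matrix (Fin n) (Fin n) (MvPolynomial (Fin n × Fin n) ℝ) :=
  Matrix.of fun a b => X (a, b)

lemma Xmat_pow_isHomogeneous {n : ℕ} (j : ℕ) (a b : Fin n) :
    ((Xmat n ^ j) a b).IsHomogeneous j := by
  induction j generalizing a b with
  | zero =>
    rw [pow_zero]
    by_cases hab : a = b
    · subst hab; rw [Matrix.one_apply_eq]; exact isHomogeneous_one _ _
    · rw [Matrix.one_apply_ne hab]; exact isHomogeneous_zero _ _ _
  | succ j IH =>
    rw [pow_succ, Matrix.mul_apply]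
    apply IsHomogeneous.sum
    intro c _
    have h2 : Xmat n c b = X (c, b) := rfl
    have := (IH a c).mul (isHomogeneous_X ℝ (c, b))
    rw [← h2] at this
    exact this

noncomputable def detPoly (n m : ℕ) (hmn : m ≤ n) : MvPolynomial (Fin n × Fin n) ℝ :=
  Matrix.det (Matrix.of fun i j : Fin m =>
    (Xmat n ^ (j : ℕ)) (Fin.castLE hmn i) (Fin.castLE hmn i))

lemma detPoly_isHomogeneous {n m : ℕ} (hmn : m ≤ n) :
    (detPoly n m hmn).IsHomogeneous (∑ i : Fin m, (i : ℕ)) := by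
  rw [detPoly, Matrix.det_apply]
  apply IsHomogeneous.sum
  intro σ _
  have hp : (∏ i : Fin m, (Matrix.of fun i j : Fin m =>
      (Xmat n ^ (j : ℕ)) (Fin.castLE hmn i) (Fin.castLE hmn i)) (σ i) i).IsHomogeneous
      (∑ i : Fin m, (i : ℕ)) := by
    apply IsHomogeneous.prod
    intro i _
    simp only [Matrix.of_apply]
    exact Xmat_pow_isHomogeneous _ _ _
  rcases Int.units_eq_one_or (Equiv.Perm.sign σ) with hs | hs <;> rw [hs]
  · simpa using hp
  · rw [Units.smul_def]
    simp only [Units.val_neg, Units.val_one, neg_smul, one_smul]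
    exact hp.neg

lemma eval_detPoly {n m : ℕ} (hmn : m ≤ n) (A : Matrix (Fin n) (Fin n) ℝ) :
    eval (fun p => A p.1 p.2) (detPoly n m hmn) =
      Matrix.det (Matrix.of fun i j : Fin m =>
        (A ^ (j : ℕ)) (Fin.castLE hmn i) (Fin.castLE hmn i)) := by
  rw [detPoly]
  rw [RingHom.map_det]
  congr 1
  funext i j
  simp only [RingHom.mapMatrix_apply, Matrix.map_apply, Matrix.of_apply]
  have hXA : (Xmat n).map (eval fun p : Fin n × Fin n => A p.1 p.2) = A := by
    funext a b
    rw [Matrix.map_apply]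
    exact eval_X _
  have : (Xmat n ^ (j : ℕ)).map (eval fun p : Fin n × Fin n => A p.1 p.2) = A ^ (j : ℕ) := by
    have h2 := map_pow ((eval fun p : Fin n × Fin n => A p.1 p.2) :
      MvPolynomial (Fin n × Fin n) ℝ →+* ℝ).mapMatrix (Xmat n) (j : ℕ)
    rw [RingHom.mapMatrix_apply, RingHom.mapMatrix_apply, hXA] at h2
    exact h2
  rw [← this, Matrix.map_apply]

lemma detPoly_ne_zero_at_diag {n m : ℕ} (hmn : m ≤ n) :
    eval (fun p => (Matrix.diagonal (fun i : Fin n => ((i : ℕ) : ℝ))) p.1 p.2)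
      (detPoly n m hmn) ≠ 0 := by
  rw [eval_detPoly]
  have hM : (Matrix.of fun i j : Fin m =>
      ((Matrix.diagonal (fun i : Fin n => ((i : ℕ) : ℝ))) ^ (j : ℕ))
        (Fin.castLE hmn i) (Fin.castLE hmn i))
      = Matrix.vandermonde (fun i : Fin m => ((i : ℕ) : ℝ)) := by
    funext i j
    rw [Matrix.of_apply, Matrix.diagonal_pow, Matrix.diagonal_apply_eq, Matrix.vandermonde_apply]
    norm_num
  rw [hM]
  apply Matrix.det_vandermonde_ne_zero_iff.mpr
  intro i j hij
  have : (i : ℕ) = (j : ℕ) := Nat.cast_injective hij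
  exact Fin.ext this

lemma detPoly_vanish {n m : ℕ} (hmn : m ≤ n) (hm : 1 ≤ m)
    (A : Matrix (Fin n) (Fin n) ℝ) (hA : A.IsHermitian)
    (hcard : (Finset.univ.image hA.eigenvalues).card ≤ m - 1) :
    eval (fun p => A p.1 p.2) (detPoly n m hmn) = 0 := by
  classical
  rw [eval_detPoly]
  set s : Finset ℝ := Finset.univ.image hA.eigenvalues with hs
  set p : Polynomial ℝ := ∏ v ∈ s, (Polynomial.X - Polynomial.C v) with hp
  have hpm : p.Monic := Polynomial.monic_prod_of_monic _ _ fun v _ => Polynomial.monic_X_sub_C v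
  have hpdeg : p.natDegree = s.card := by
    rw [hp, Polynomial.natDegree_prod_of_monic _ _ fun v _ => Polynomial.monic_X_sub_C v]
    simp [Polynomial.natDegree_X_sub_C]
  set q : Polynomial ℝ := Polynomial.X ^ (m - 1 - s.card) * p with hq
  have hqm : q.Monic := (Polynomial.monic_X_pow _).mul hpm
  have hqdeg : q.natDegree = m - 1 := by
    rw [hq, (Polynomial.monic_X_pow _).natDegree_mul hpm, Polynomial.natDegree_X_pow, hpdeg]
    omega
  have hqeval : ∀ i : Fin n, q.eval (hA.eigenvalues i) = 0 := by
    intro i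
    rw [hq, Polynomial.eval_mul, Polynomial.eval_prod]
    have : ∏ v ∈ s, Polynomial.eval (hA.eigenvalues i) (Polynomial.X - Polynomial.C v) = 0 :=
      Finset.prod_eq_zero (Finset.mem_image.mpr ⟨i, Finset.mem_univ _, rfl⟩) (by simp)
    rw [this, mul_zero]
  set c : Fin m → ℝ := fun j => q.coeff j with hcdef
  have hc : c ≠ 0 := by
    intro h0
    have h1 := congrFun h0 ⟨m - 1, by omega⟩
    simp only [hcdef, Pi.zero_apply] at h1
    rw [← hqdeg] at h1
    rw [hqm.coeff_natDegree] at h1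
    exact one_ne_zero h1
  apply Matrix.exists_mulVec_eq_zero_iff.mp ⟨c, hc, ?_⟩
  funext i
  have hspec := hA.spectral_theorem
  rw [show (RCLike.ofReal ∘ hA.eigenvalues : Fin n → ℝ) = hA.eigenvalues by
      funext t; simp [RCLike.ofReal_real_eq_id]] at hspec
  have hentry : ∀ (j : ℕ) (a : Fin n), (A ^ j) a a
      = ∑ t, (hA.eigenvectorUnitary : Matrix (Fin n) (Fin n) ℝ) a t * (hA.eigenvectorUnitary : Matrix (Fin n) (Fin n) ℝ) a t
          * hA.eigenvalues t ^ j := by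
    intro j a
    conv_lhs => rw [hspec]
    exact conj_pow_entry hA.eigenvectorUnitary hA.eigenvalues j a
  rw [Matrix.mulVec, Pi.zero_apply]
  rw [dotProduct]
  have hrw : ∀ j : Fin m, (Matrix.of fun i j : Fin m =>
      (A ^ (j : ℕ)) (Fin.castLE hmn i) (Fin.castLE hmn i)) i j * c j
      = ∑ t, ((hA.eigenvectorUnitary : Matrix (Fin n) (Fin n) ℝ) (Fin.castLE hmn i) t
          * (hA.eigenvectorUnitary : Matrix (Fin n) (Fin n) ℝ) (Fin.castLE hmn i) t)
          * (c j * hA.eigenvalues t ^ (j : ℕ)) := by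
    intro j
    rw [Matrix.of_apply, hentry (j : ℕ) (Fin.castLE hmn i), Finset.sum_mul]
    congr 1
    funext t
    ring
  rw [Finset.sum_congr rfl fun j _ => hrw j]
  rw [Finset.sum_comm]
  apply Finset.sum_eq_zero
  intro t _
  rw [← Finset.mul_sum]
  have : ∑ j : Fin m, c j * hA.eigenvalues t ^ (j : ℕ) = q.eval (hA.eigenvalues t) := by
    rw [Polynomial.eval_eq_sum_range, hqdeg, show m - 1 + 1 = m from by omega]
    exact Fin.sum_univ_eq_sum_range (fun k => q.coeff k * hA.eigenvalues t ^ k) m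
  rw [this, hqeval t, mul_zero]


end Stmt15Aux


open Stmt15Aux

/-- The minimal degree of a non-zero homogeneous polynomial function on the space of
real symmetric `n×n` matrices vanishing on the set `E_k` of symmetric matrices with at
most `n−k−1` distinct eigenvalues is `(n−k)(n−k−1)/2`. -/
theorem stmt15 (n k : ℕ) (hn : 2 ≤ n) (hk : k ≤ n - 2) :
    IsLeast {d : ℕ | ∃ f : MvPolynomial (Fin n × Fin n) ℝ,
        f.IsHomogeneous d ∧
        (∃ A : Matrix (Fin n) (Fin n) ℝ, A.IsHermitian ∧
          MvPolynomial.eval (fun p => A p.1 p.2) f ≠ 0) ∧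
        (∀ (A : Matrix (Fin n) (Fin n) ℝ) (hA : A.IsHermitian),
          (Finset.univ.image hA.eigenvalues).card ≤ n - k - 1 →
          MvPolynomial.eval (fun p => A p.1 p.2) f = 0)}
      ((n - k) * (n - k - 1) / 2) := by
  have hm2 : 2 ≤ n - k := by omega
  have hmn : n - k ≤ n := Nat.sub_le n k
  have hm1 : 1 ≤ n - k := by omega
  have hsum : (∑ i : Fin (n - k), (i : ℕ)) = (n - k) * (n - k - 1) / 2 := by
    rw [Fin.sum_univ_eq_sum_range (fun t => t) (n - k)]
    exact Finset.sum_range_id (n - k)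
  constructor
  · -- membership
    refine ⟨detPoly n (n - k) hmn, ?_, ?_, ?_⟩
    · have := detPoly_isHomogeneous hmn
      rwa [hsum] at this
    · exact ⟨Matrix.diagonal (fun i : Fin n => ((i : ℕ) : ℝ)),
        Matrix.isHermitian_diagonal _, detPoly_ne_zero_at_diag hmn⟩
    · intro A hA hc
      exact detPoly_vanish hmn hm1 A hA hc
  · -- lower bound
    rintro d ⟨f, hfh, ⟨A, hA, hfA⟩, hvan⟩
    have hfne : f ≠ 0 := fun h0 => hfA (by rw [h0, map_zero])
    set Q : Matrix (Fin n) (Fin n) ℝ := (hA.eigenvectorUnitary : Matrix (Fin n) (Fin n) ℝ)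
      with hQdef
    set u : Fin n × Fin n → MvPolynomial (Fin n) ℝ :=
      fun pr => ∑ t, C (Q pr.1 t * Q pr.2 t) * X t with hudef
    have hu1 : ∀ pr, (u pr).IsHomogeneous 1 := fun pr =>
      IsHomogeneous.sum _ _ _ (fun t _ => isHomogeneous_C_mul_X _ _)
    set g : MvPolynomial (Fin n) ℝ := aeval u f with hgdef
    have hgh : g.IsHomogeneous d := by
      have := hfh.aeval u hu1
      rwa [one_mul] at this
    have evalg : ∀ x : Fin n → ℝ, eval x g =
        eval (fun pr : Fin n × Fin n =>
          (Q * Matrix.diagonal x * star Q) pr.1 pr.2) f := by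
      intro x
      rw [hgdef, MvPolynomial.aeval_def, MvPolynomial.algebraMap_eq, ← eval_assoc]
      have hpt : (⇑(eval x) ∘ u) = fun pr : Fin n × Fin n =>
          (Q * Matrix.diagonal x * star Q) pr.1 pr.2 := by
        funext pr
        rw [Function.comp_apply, hudef]
        simp only [map_sum, _root_.map_mul, eval_C, eval_X]
        rw [conj_diag_entry Q x pr.1 pr.2]
      rw [hpt]
    have hBA : Q * Matrix.diagonal hA.eigenvalues * star Q = A := by
      have hspec := hA.spectral_theorem
      rw [show (RCLike.ofReal ∘ hA.eigenvalues : Fin n → ℝ) = hA.eigenvalues by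
        funext t; simp [RCLike.ofReal_real_eq_id]] at hspec
      exact hspec.symm
    have hg0 : g ≠ 0 := by
      intro h0
      apply hfA
      rw [← hBA] at hfA ⊢
      rw [← evalg hA.eigenvalues, h0, map_zero]
    have hvang : ∀ x : Fin n → ℝ, (Finset.univ.image x).card ≤ n - k - 1 →
        eval x g = 0 := by
      intro x hx
      rw [evalg x]
      apply hvan _ (conj_isHermitian hA.eigenvectorUnitary x)
      have hsub : Finset.univ.image (conj_isHermitian hA.eigenvectorUnitary x).eigenvalues
          ⊆ Finset.univ.image x := by
        intro r hr
        obtain ⟨i, -, rfl⟩ := Finset.mem_image.mp hr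
        have hmem := (conj_isHermitian hA.eigenvectorUnitary x).eigenvalues_mem_spectrum_real i
        rw [conj_spectrum] at hmem
        obtain ⟨t, ht⟩ := spectrum_diagonal_sub hmem
        exact Finset.mem_image.mpr ⟨t, Finset.mem_univ _, ht⟩
      exact le_trans (Finset.card_le_card hsub) hx
    have hkl := kl (n - k - 1) g hg0 hvang
    have hdeg : g.totalDegree = d := hgh.totalDegree hg0
    rw [hdeg] at hkl
    have : (n - k - 1 + 1).choose 2 = (n - k) * (n - k - 1) / 2 := by
      rw [show n - k - 1 + 1 = n - k from by omega, Nat.choose_two_right]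
    omega
end
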